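/- arXiv:1509.08813 — 7 statements merged into one kernel-verified Lean document; each statement's English description precedes it below -/
import Mathlib

section
/- Every transitive compact dynamical system (X,T) is Li-Yorke sensitive, i.e., there exists δ > 0 such that for every point x ∈ X and every neighborhood U of x there is a point y ∈ U with liminf_{n→∞} d(Tⁿx, Tⁿy) = 0 and limsup_{n→∞} d(Tⁿx, Tⁿy) > δ. -/
open Filter Topology Set Metric

section Defs

variable {X : Type*}

/-- A set is "opene" if it is open and nonempty. -/
def Opene [TopologicalSpace X] (U : Set X) : Prop := IsOpen U ∧ U.Nonempty

/-- `N_T(U,V) = {n ∈ ℕ : U ∩ T⁻ⁿV ≠ ∅}`. -/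
def NTset (T : X → X) (U V : Set X) : Set ℕ := {n | (U ∩ T^[n] ⁻¹' V).Nonempty}

/-- `N_T(x,G) = {n ∈ ℕ : Tⁿx ∈ G}`. -/
def NTpt (T : X → X) (x : X) (G : Set X) : Set ℕ := {n | T^[n] x ∈ G}

/-- `ω_{N_T}(x)`. -/
def omegaNT [TopologicalSpace X] (T : X → X) (x : X) : Set X :=
  {z | ∀ G : Set X, IsOpen G → z ∈ G → ∀ U V : Set X, Opene U → Opene V →
    (NTpt T x G ∩ NTset T U V).Nonempty}

/-- The ω-limit set `ω_T(x)`. -/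
def omegaT [TopologicalSpace X] (T : X → X) (x : X) : Set X :=
  {z | ∀ G : Set X, IsOpen G → z ∈ G → (NTpt T x G).Infinite}

/-- Transitive compact system. -/
def TransCompact [TopologicalSpace X] (T : X → X) : Prop :=
  ∀ x : X, (omegaNT T x).Nonempty

/-- Topologically transitive system. -/
def TopTransitive [TopologicalSpace X] (T : X → X) : Prop :=
  ∀ U V : Set X, Opene U → Opene V → (NTset T U V).Nonempty

/-- Weakly mixing: the product system `(X×X, T×T)` is topologically transitive. -/
def WeaklyMixing [TopologicalSpace X] (T : X → X) : Prop :=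
  TopTransitive (fun p : X × X => (T p.1, T p.2))

/-- Totally transitive: `(X, T^k)` is transitive for every `k ≥ 1`. -/
def TotallyTransitive [TopologicalSpace X] (T : X → X) : Prop :=
  ∀ k : ℕ, 1 ≤ k → TopTransitive (T^[k])

/-- Minimal system: every point has dense orbit. -/
def MinimalSystem [TopologicalSpace X] (T : X → X) : Prop :=
  ∀ x : X, Dense (Set.range fun n : ℕ => T^[n] x)

/-- A minimal subset: nonempty, closed, `T M = M`, with no proper nonempty closed invariant subset. -/
def IsMinimalSubset [TopologicalSpace X] (T : X → X) (M : Set X) : Prop :=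
  M.Nonempty ∧ IsClosed M ∧ T '' M = M ∧
    ∀ M' : Set X, M' ⊆ M → M'.Nonempty → IsClosed M' → T '' M' = M' → M' = M

/-- A minimal point: one that lies in some minimal subset. -/
def IsMinimalPoint [TopologicalSpace X] (T : X → X) (x : X) : Prop :=
  ∃ M : Set X, IsMinimalSubset T M ∧ x ∈ M

/-- An M-system: transitive with a dense set of minimal points. -/
def MSystem [TopologicalSpace X] (T : X → X) : Prop :=
  TopTransitive T ∧ Dense {x : X | IsMinimalPoint T x}

/-- Thick subset of ℕ. -/
def ThickSet (S : Set ℕ) : Prop := ∀ N : ℕ, ∃ m : ℕ, ∀ i ≤ N, m + i ∈ S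

/-- Syndetic subset of ℕ. -/
def SyndeticSet (S : Set ℕ) : Prop := ∃ N : ℕ, ∀ i : ℕ, ∃ j ≤ N, i + j ∈ S

/-- Thickly syndetic subset of ℕ. -/
def ThicklySyndeticSet (S : Set ℕ) : Prop :=
  ∀ N : ℕ, SyndeticSet {m : ℕ | ∀ i ≤ N, m + i ∈ S}

/-- `S_T(U,δ)`. -/
def STset [MetricSpace X] (T : X → X) (U : Set X) (δ : ℝ) : Set ℕ :=
  {n | ∃ x ∈ U, ∃ y ∈ U, δ < dist (T^[n] x) (T^[n] y)}

/-- Thickly sensitive system. -/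
def ThicklySensitive [MetricSpace X] (T : X → X) : Prop :=
  ∃ δ : ℝ, 0 < δ ∧ ∀ U : Set X, Opene U → ThickSet (STset T U δ)

/-- Thickly syndetically sensitive system. -/
def ThicklySyndeticallySensitive [MetricSpace X] (T : X → X) : Prop :=
  ∃ δ : ℝ, 0 < δ ∧ ∀ U : Set X, Opene U → ThicklySyndeticSet (STset T U δ)

/-- Multi-sensitive system. -/
def MultiSensitive [MetricSpace X] (T : X → X) : Prop :=
  ∃ δ : ℝ, 0 < δ ∧ ∀ (k : ℕ) (U : Fin (k + 1) → Set X), (∀ i, Opene (U i)) →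
    (⋂ i, STset T (U i) δ).Nonempty

/-- Thickly syndetically transitive system. -/
def ThicklySyndeticallyTransitive [TopologicalSpace X] (T : X → X) : Prop :=
  ∀ U V : Set X, Opene U → Opene V → ThicklySyndeticSet (NTset T U V)

/-- A proximal pair: `liminf d(Tⁿx,Tⁿy) = 0`. -/
def ProximalPair [MetricSpace X] (T : X → X) (x y : X) : Prop :=
  liminf (fun n : ℕ => dist (T^[n] x) (T^[n] y)) atTop = 0

/-- A proximal system: every pair of points is proximal. -/
def ProximalSystem [MetricSpace X] (T : X → X) : Prop :=
  ∀ x y : X, ProximalPair T x y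

/-- The proximal cell of `x`. -/
def ProxCell [MetricSpace X] (T : X → X) (x : X) : Set X :=
  {y | ProximalPair T x y}

/-- Li-Yorke sensitivity. -/
def LiYorkeSensitive [MetricSpace X] (T : X → X) : Prop :=
  ∃ δ : ℝ, 0 < δ ∧ ∀ x : X, ∀ U ∈ 𝓝 x, ∃ y ∈ U,
    liminf (fun n : ℕ => dist (T^[n] x) (T^[n] y)) atTop = 0 ∧
    δ < limsup (fun n : ℕ => dist (T^[n] x) (T^[n] y)) atTop

/-- Spatio-temporally chaotic system. -/
def SpatioTemporallyChaotic [MetricSpace X] (T : X → X) : Prop :=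
  ∀ x : X, ∀ U ∈ 𝓝 x, ∃ y ∈ U,
    liminf (fun n : ℕ => dist (T^[n] x) (T^[n] y)) atTop = 0 ∧
    0 < limsup (fun n : ℕ => dist (T^[n] x) (T^[n] y)) atTop

/-- A distal point: not proximal to any other point of its orbit closure. -/
def IsDistalPoint [MetricSpace X] (T : X → X) (x : X) : Prop :=
  ∀ y ∈ closure (Set.range fun n : ℕ => T^[n] x), y ≠ x →
    0 < liminf (fun n : ℕ => dist (T^[n] x) (T^[n] y)) atTop

/-- The Lyapunov number `𝕃_r`. -/
noncomputable def LyapR [MetricSpace X] (T : X → X) : ℝ :=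
  sSup {δ : ℝ | 0 < δ ∧ ∀ x : X, ∀ U : Set X, IsOpen U → x ∈ U →
    ∃ y ∈ U, ∃ n : ℕ, δ < dist (T^[n] x) (T^[n] y)}

/-- The Lyapunov number `𝕃̄_r`. -/
noncomputable def LyapRbar [MetricSpace X] (T : X → X) : ℝ :=
  sSup {δ : ℝ | 0 < δ ∧ ∀ x : X, ∀ U : Set X, IsOpen U → x ∈ U →
    ∃ y ∈ U, δ < limsup (fun n : ℕ => dist (T^[n] x) (T^[n] y)) atTop}

/-- `min_{1≤i≤k} d(Tⁿ xᵢ, Tⁿ yᵢ)`. -/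
noncomputable def minDist [MetricSpace X] (T : X → X) {k : ℕ}
    (x y : Fin (k + 1) → X) (n : ℕ) : ℝ :=
  Finset.univ.inf' Finset.univ_nonempty (fun i => dist (T^[n] (x i)) (T^[n] (y i)))

/-- The Lyapunov number `𝕃_{m,r}`. -/
noncomputable def LyapMR [MetricSpace X] (T : X → X) : ℝ :=
  sSup {δ : ℝ | 0 < δ ∧ ∀ (k : ℕ) (x : Fin (k + 1) → X) (U : Fin (k + 1) → Set X),
    (∀ i, IsOpen (U i) ∧ x i ∈ U i) →
    ∃ y : Fin (k + 1) → X, (∀ i, y i ∈ U i) ∧ ∃ n : ℕ, δ < minDist T x y n}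

/-- The Lyapunov number `𝕃̄_{m,r}`. -/
noncomputable def LyapMRbar [MetricSpace X] (T : X → X) : ℝ :=
  sSup {δ : ℝ | 0 < δ ∧ ∀ (k : ℕ) (x : Fin (k + 1) → X) (U : Fin (k + 1) → Set X),
    (∀ i, IsOpen (U i) ∧ x i ∈ U i) →
    ∃ y : Fin (k + 1) → X, (∀ i, y i ∈ U i) ∧
      δ < limsup (fun n : ℕ => minDist T x y n) atTop}

/-- The Lyapunov number `𝕃_{m,d}`. -/
noncomputable def LyapMD [MetricSpace X] (T : X → X) : ℝ :=
  sSup {δ : ℝ | 0 < δ ∧ ∀ (k : ℕ) (U : Fin (k + 1) → Set X), (∀ i, Opene (U i)) →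
    ∃ x y : Fin (k + 1) → X, (∀ i, x i ∈ U i ∧ y i ∈ U i) ∧ ∃ n : ℕ, δ < minDist T x y n}

/-- The Lyapunov number `𝕃̄_{m,d}`. -/
noncomputable def LyapMDbar [MetricSpace X] (T : X → X) : ℝ :=
  sSup {δ : ℝ | 0 < δ ∧ ∀ (k : ℕ) (U : Fin (k + 1) → Set X), (∀ i, Opene (U i)) →
    ∃ x y : Fin (k + 1) → X, (∀ i, x i ∈ U i ∧ y i ∈ U i) ∧
      δ < limsup (fun n : ℕ => minDist T x y n) atTop}

/-- `(k,T,ε)`-separated set with respect to the sequence `ns` (with `ns 0 = 0` by convention). -/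
def IsSepSet [MetricSpace X] (T : X → X) (ns : ℕ → ℕ) (k : ℕ) (ε : ℝ) (E : Set X) : Prop :=
  ∀ x ∈ E, ∀ y ∈ E, x ≠ y → ∃ j < k, ε < dist (T^[ns j] x) (T^[ns j] y)

/-- `sep(k,T,ε)`: maximal cardinality of a `(k,T,ε)`-separated set. -/
noncomputable def sepNum [MetricSpace X] (T : X → X) (ns : ℕ → ℕ) (k : ℕ) (ε : ℝ) : ℕ :=
  sSup {r : ℕ | ∃ E : Finset X, IsSepSet T ns k ε ↑E ∧ E.card = r}

/-- Topological sequence entropy along `ns`: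
`h_N(T) = lim_{ε→0} limsup_{k→∞} (1/k) log sep(k,T,ε)` (the limit as `ε → 0⁺` of the
nonincreasing-in-`ε` quantity, i.e. the supremum over `ε > 0`). -/
noncomputable def seqEntropy [MetricSpace X] (T : X → X) (ns : ℕ → ℕ) : EReal :=
  ⨆ (ε : ℝ) (_ : 0 < ε),
    limsup (fun k : ℕ => ((Real.log (sepNum T ns k ε) / k : ℝ) : EReal)) atTop

end Defs

section KeyAux

variable {X : Type*} [MetricSpace X]

lemma opene_infinite (hperf : ∀ x : X, (𝓝[≠] x).NeBot)
    {V : Set X} (hV : IsOpen V) (hne : V.Nonempty) : V.Infinite := by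
  intro hfin
  obtain ⟨v, hv⟩ := hne
  have hFc : IsClosed (V \ {v}) := (hfin.subset diff_subset).isClosed
  have hO : IsOpen (V ∩ (V \ {v})ᶜ) := hV.inter hFc.isOpen_compl
  have hvO : v ∈ V ∩ (V \ {v})ᶜ := ⟨hv, fun h => h.2 rfl⟩
  haveI := hperf v
  have hmem : V ∩ (V \ {v})ᶜ ∈ 𝓝[≠] v :=
    mem_nhdsWithin_of_mem_nhds (hO.mem_nhds hvO)
  have hmem2 : ({v}ᶜ : Set X) ∈ 𝓝[≠] v := self_mem_nhdsWithin
  obtain ⟨p, ⟨hp1, hp2⟩, hp3⟩ := Filter.nonempty_of_mem (Filter.inter_mem hmem hmem2)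
  exact hp3 (by_contra fun h => hp2 ⟨hp1, h⟩)

/-- Key lemma: for `z ∈ ω_{N_T}(x)`, the set `N_T(x,G) ∩ N_T(U,V)` contains
arbitrarily large elements. -/
lemma keyB (hperf : ∀ x : X, (𝓝[≠] x).NeBot) {T : X → X} (hTc : Continuous T)
    {x z : X} (hz : z ∈ omegaNT T x) {G U V : Set X} (hG : IsOpen G) (hzG : z ∈ G)
    (hU : Opene U) (hV : Opene V) (N : ℕ) :
    ∃ n, N < n ∧ T^[n] x ∈ G ∧ (U ∩ T^[n] ⁻¹' V).Nonempty := by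
  obtain ⟨u, hu⟩ := hU.2
  -- pick w in V outside the finite forward orbit segment of u
  classical
  set S : Finset X := (Finset.range (N + 1)).image (fun j => T^[j] u) with hS
  have hVinf := opene_infinite hperf hV.1 hV.2
  obtain ⟨w, hwV, hwS⟩ := hVinf.exists_notMem_finset S
  -- positive distance to the finite set
  have hpos : ∀ j ∈ Finset.range (N + 1), 0 < dist w (T^[j] u) := by
    intro j hj
    rw [dist_pos]
    intro hwe
    exact hwS (Finset.mem_image.2 ⟨j, hj, hwe.symm⟩)
  set d0 : ℝ := (Finset.range (N + 1)).inf' (by simp) (fun j => dist w (T^[j] u)) with hd0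
  have hd0pos : 0 < d0 := by
    rw [hd0, Finset.lt_inf'_iff]
    exact fun j hj => hpos j hj
  set η : ℝ := d0 / 3 with hη
  have hηpos : 0 < η := by positivity
  -- shrink U
  set U' : Set X := U ∩ ⋂ j ∈ Finset.range (N + 1), T^[j] ⁻¹' ball (T^[j] u) η with hU'
  have hU'open : IsOpen U' := by
    refine hU.1.inter (isOpen_biInter_finset fun j _ => ?_)
    exact isOpen_ball.preimage (hTc.iterate j)
  have hU'mem : u ∈ U' := by
    refine ⟨hu, mem_iInter₂.2 fun j _ => ?_⟩
    simp [mem_ball, hηpos]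
  set V' : Set X := V ∩ ball w η with hV'
  have hV'open : IsOpen V' := hV.1.inter isOpen_ball
  have hV'mem : w ∈ V' := ⟨hwV, mem_ball_self hηpos⟩
  obtain ⟨n, hn1, hn2⟩ := hz G hG hzG U' V' ⟨hU'open, u, hU'mem⟩ ⟨hV'open, w, hV'mem⟩
  obtain ⟨q, hq1, hq2⟩ := hn2
  refine ⟨n, ?_, hn1, q, hq1.1, hq2.1⟩
  by_contra hle
  push_neg at hle
  have hmem : n ∈ Finset.range (N + 1) := Finset.mem_range.2 (Nat.lt_succ_of_le hle)
  have h1 : dist (T^[n] q) (T^[n] u) < η := by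
    have := mem_iInter₂.1 hq1.2 n hmem
    simpa [mem_ball] using this
  have h2 : dist (T^[n] q) w < η := by simpa [mem_ball, dist_comm] using hq2.2
  have h3 : d0 ≤ dist w (T^[n] u) := Finset.inf'_le _ hmem
  have : dist w (T^[n] u) ≤ dist w (T^[n] q) + dist (T^[n] q) (T^[n] u) := dist_triangle _ _ _
  rw [dist_comm w (T^[n] q)] at this
  nlinarith

end KeyAux


/-- Every transitive compact dynamical system is Li-Yorke sensitive. -/
theorem stmt0 {X : Type*} [MetricSpace X] [CompactSpace X] [Nontrivial X]
    (hperf : ∀ x : X, (𝓝[≠] x).NeBot)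
    {T : X → X} (hTc : Continuous T) (hTs : Function.Surjective T)
    (htc : TransCompact T) :
    LiYorkeSensitive T := by
  classical
  obtain ⟨a, b, hab⟩ := exists_pair_ne X
  set D : ℝ := dist a b with hDdef
  have hD : 0 < D := dist_pos.2 hab
  -- global bound on distances
  obtain ⟨pq, -, hmax'⟩ := isCompact_univ.exists_isMaxOn (univ_nonempty (α := X × X))
    continuous_dist.continuousOn
  have hmax : ∀ p : X × X, p ∈ (univ : Set (X × X)) → dist p.1 p.2 ≤ dist pq.1 pq.2 :=
    fun p hp => hmax' hp
  set C0 : ℝ := dist pq.1 pq.2 with hC0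
  have hbd : ∀ p q : X, dist p q ≤ C0 := fun p q => hmax (p, q) (mem_univ _)
  refine ⟨D / 8, by positivity, fun x U hU => ?_⟩
  obtain ⟨z, hz⟩ := htc x
  -- a point far from z
  have hw0 : ∃ w0 : X, D / 2 ≤ dist z w0 := by
    by_cases h : D / 2 ≤ dist z a
    · exact ⟨a, h⟩
    · refine ⟨b, ?_⟩
      have := dist_triangle a z b
      rw [dist_comm a z] at this
      push_neg at h
      linarith
  obtain ⟨w0, hw0⟩ := hw0
  obtain ⟨O, hOU, hOopen, hxO⟩ := _root_.mem_nhds_iff.1 hU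
  -- the inductive step
  have step : ∀ p : Set X × ℕ, (IsOpen p.1 ∧ p.1.Nonempty) →
      ∃ q : Set X × ℕ, (IsOpen q.1 ∧ q.1.Nonempty) ∧
        (closure q.1 ⊆ p.1 ∧ p.2 < q.2 ∧
          (∃ m, p.2 < m ∧ ∀ y' ∈ closure q.1,
            dist (T^[m] x) (T^[m] y') < 2 / ((p.2 : ℝ) + 1)) ∧
          (∃ n, p.2 < n ∧ ∀ y' ∈ closure q.1,
            D / 4 ≤ dist (T^[n] x) (T^[n] y'))) := by
    rintro ⟨W, N⟩ ⟨hWo, hWne⟩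
    have hε : (0:ℝ) < 1 / ((N : ℝ) + 1) := by positivity
    have hδ8 : (0:ℝ) < D / 8 := by positivity
    -- proximal step
    obtain ⟨m, hmN, hmx, hmW⟩ := keyB hperf hTc hz isOpen_ball
      (mem_ball_self hε) ⟨hWo, hWne⟩
      ⟨isOpen_ball, z, mem_ball_self hε⟩ N
    set W1 : Set X := W ∩ T^[m] ⁻¹' ball z (1 / ((N : ℝ) + 1)) with hW1
    have hW1o : IsOpen W1 := hWo.inter (isOpen_ball.preimage (hTc.iterate m))
    have hW1ne : W1.Nonempty := hmW
    -- separation step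
    obtain ⟨n, hnm, hnx, hnW⟩ := keyB hperf hTc hz isOpen_ball
      (mem_ball_self hδ8) ⟨hW1o, hW1ne⟩
      ⟨isOpen_ball, w0, mem_ball_self hδ8⟩ m
    set W2 : Set X := W1 ∩ T^[n] ⁻¹' ball w0 (D / 8) with hW2
    have hW2o : IsOpen W2 := hW1o.inter (isOpen_ball.preimage (hTc.iterate n))
    have hW2ne : W2.Nonempty := hnW
    obtain ⟨p, hp⟩ := hW2ne
    obtain ⟨r, hr, hball⟩ := Metric.nhds_basis_closedBall.mem_iff.1 (hW2o.mem_nhds hp)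
    have hclos : closure (ball p r) ⊆ W2 :=
      (closure_ball_subset_closedBall).trans hball
    refine ⟨(ball p r, n), ⟨isOpen_ball, p, mem_ball_self hr⟩,
      fun y' hy' => ((hclos hy').1).1, lt_trans hmN hnm, ⟨m, hmN, ?_⟩, ⟨n, lt_trans hmN hnm, ?_⟩⟩
    · intro y' hy'
      have h1 : T^[m] y' ∈ ball z (1 / ((N : ℝ) + 1)) := (hclos hy').1.2
      have h2 := dist_triangle (T^[m] x) z (T^[m] y')
      rw [mem_ball] at hmx h1
      rw [dist_comm] at h1
      have : 2 / ((N : ℝ) + 1) = 1 / ((N : ℝ) + 1) + 1 / ((N : ℝ) + 1) := by ring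
      rw [this]
      linarith
    · intro y' hy'
      have h1 : T^[n] y' ∈ ball w0 (D / 8) := (hclos hy').2
      rw [mem_ball] at hnx h1
      have h2 := dist_triangle z (T^[n] x) (T^[n] y')
      have h3 := dist_triangle z (T^[n] y') w0
      rw [dist_comm z (T^[n] x)] at h2
      rw [dist_comm (T^[n] y') w0] at h3
      rw [dist_comm w0 (T^[n] y')] at h3
      linarith [hw0]
  choose! f hf1 hf2 using step
  set sq : ℕ → Set X × ℕ := fun k => f^[k] (O, 0) with hsq
  have hsq0 : sq 0 = (O, 0) := rfl
  have hsqs : ∀ k, sq (k + 1) = f (sq k) := fun k => Function.iterate_succ_apply' f k _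
  have hgood : ∀ k, IsOpen (sq k).1 ∧ (sq k).1.Nonempty := by
    intro k
    induction k with
    | zero => exact ⟨hOopen, x, hxO⟩
    | succ k ih => rw [hsqs k]; exact hf1 _ ih
  have hrel : ∀ k, closure (sq (k + 1)).1 ⊆ (sq k).1 ∧ (sq k).2 < (sq (k + 1)).2 ∧
      (∃ m, (sq k).2 < m ∧ ∀ y' ∈ closure (sq (k + 1)).1,
        dist (T^[m] x) (T^[m] y') < 2 / (((sq k).2 : ℝ) + 1)) ∧
      (∃ n, (sq k).2 < n ∧ ∀ y' ∈ closure (sq (k + 1)).1,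
        D / 4 ≤ dist (T^[n] x) (T^[n] y')) := by
    intro k
    rw [hsqs k]
    exact hf2 _ (hgood k)
  -- index growth
  have hNk : ∀ k, k ≤ (sq k).2 := by
    intro k
    induction k with
    | zero => exact Nat.zero_le _
    | succ k ih => exact Nat.succ_le_of_lt (lt_of_le_of_lt ih (hrel k).2.1)
  -- nested compact sets
  set Cs : ℕ → Set X := fun k => closure (sq (k + 1)).1 with hCs
  have hsub : ∀ k, Cs (k + 1) ⊆ Cs k :=
    fun k => ((hrel (k + 1)).1).trans subset_closure
  have hCne : ∀ k, (Cs k).Nonempty := fun k => (hgood (k + 1)).2.closure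
  obtain ⟨y, hy⟩ := IsCompact.nonempty_iInter_of_sequence_nonempty_isCompact_isClosed
    Cs hsub hCne isClosed_closure.isCompact (fun k => isClosed_closure)
  have hyk : ∀ k, y ∈ Cs k := fun k => mem_iInter.1 hy k
  have hyO : y ∈ O := (hrel 0).1 (hyk 0)
  refine ⟨y, hOU hyO, ?_, ?_⟩
  · -- liminf = 0
    set u : ℕ → ℝ := fun n => dist (T^[n] x) (T^[n] y) with hu
    have hbdd_below : IsBoundedUnder (· ≥ ·) atTop u :=
      ⟨0, Filter.eventually_map.2 (Filter.Eventually.of_forall fun n => dist_nonneg)⟩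
    have hbdd_above : IsBoundedUnder (· ≤ ·) atTop u :=
      ⟨C0, Filter.eventually_map.2 (Filter.Eventually.of_forall fun n => hbd _ _)⟩
    have h1 : liminf u atTop ≤ 0 := by
      refine le_of_forall_pos_le_add fun ε hε => ?_
      refine liminf_le_of_frequently_le ?_ hbdd_below
      rw [Filter.frequently_atTop]
      intro M
      obtain ⟨K, hK⟩ := exists_nat_gt (2 / ε)
      set k := max M K with hk
      obtain ⟨m, hm1, hm2⟩ := (hrel k).2.2.1
      refine ⟨m, ?_, ?_⟩
      · exact le_trans (le_trans (le_max_left M K) (hNk k)) (le_of_lt hm1)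
      · have hmy := hm2 y (hyk k)
        have hk1 : (K : ℝ) ≤ (sq k).2 := by
          exact_mod_cast le_trans (le_max_right M K) (hNk k)
        have hK' : 2 / ε < ((sq k).2 : ℝ) + 1 := by
          have : (0:ℝ) ≤ (K : ℝ) := Nat.cast_nonneg K
          linarith
        have hpos : (0:ℝ) < ((sq k).2 : ℝ) + 1 := by positivity
        have : 2 / (((sq k).2 : ℝ) + 1) < ε := by
          rw [div_lt_iff₀ hpos]
          have := (div_lt_iff₀ hε).1 hK'
          linarith [mul_comm ε (((sq k).2 : ℝ) + 1)]
        have : u m < ε := lt_trans hmy this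
        linarith
    have h2 : (0:ℝ) ≤ liminf u atTop := by
      refine le_liminf_of_le hbdd_above.isCoboundedUnder_ge ?_
      exact Filter.Eventually.of_forall fun n => dist_nonneg
    exact le_antisymm h1 h2
  · -- limsup > D/8
    have hfreq : ∃ᶠ n in atTop, D / 4 ≤ dist (T^[n] x) (T^[n] y) := by
      rw [Filter.frequently_atTop]
      intro M
      obtain ⟨n, hn1, hn2⟩ := (hrel M).2.2.2
      exact ⟨n, le_trans (hNk M) (le_of_lt hn1), hn2 y (hyk M)⟩
    have hbdd_above : IsBoundedUnder (· ≤ ·) atTop (fun n : ℕ => dist (T^[n] x) (T^[n] y)) :=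
      ⟨C0, Filter.eventually_map.2 (Filter.Eventually.of_forall fun n => hbd _ _)⟩
    have := le_limsup_of_frequently_le hfreq hbdd_above
    linarith
end

section
/- Every transitive compact dynamical system (X,T) that is not proximal is thickly sensitive. -/
open Filter Topology Set Metric

section Aux

variable {X : Type*} [MetricSpace X] {T : X → X}

/-- Forward invariance of `ω_{N_T}(x)`. -/
lemma omegaNT_maps (hTc : Continuous T) (hTs : Function.Surjective T) {x z : X}
    (hz : z ∈ omegaNT T x) : T z ∈ omegaNT T x := by
  intro G hG hTzG U V hU hV
  obtain ⟨n, hn⟩ := hz (T ⁻¹' G) (hG.preimage hTc) hTzG U (T ⁻¹' V) hU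
    ⟨hV.1.preimage hTc, hV.2.preimage hTs⟩
  obtain ⟨w, hwU, hwV⟩ := hn.2
  refine ⟨n + 1, ?_, ⟨w, hwU, ?_⟩⟩
  · show T^[n+1] x ∈ G
    rw [Function.iterate_succ_apply']
    exact hn.1
  · show T^[n+1] w ∈ V
    rw [Function.iterate_succ_apply']
    exact hwV

lemma omegaNT_tail (hTc : Continuous T) (hTs : Function.Surjective T) (x : X) :
    omegaNT T (T x) ⊆ omegaNT T x := by
  intro z hz G hG hzG U V hU hV
  obtain ⟨n, hn⟩ := hz G hG hzG U (T ⁻¹' V) hU ⟨hV.1.preimage hTc, hV.2.preimage hTs⟩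
  obtain ⟨w, hwU, hwV⟩ := hn.2
  refine ⟨n + 1, ?_, ⟨w, hwU, ?_⟩⟩
  · show T^[n+1] x ∈ G
    rw [Function.iterate_succ_apply]
    exact hn.1
  · show T^[n+1] w ∈ V
    rw [Function.iterate_succ_apply']
    exact hwV

lemma omegaNT_iterate_tail (hTc : Continuous T) (hTs : Function.Surjective T) :
    ∀ (k : ℕ) (x : X), omegaNT T (T^[k] x) ⊆ omegaNT T x := by
  intro k
  induction k with
  | zero => intro x; exact fun z hz => hz
  | succ k ih =>
      intro x
      have h1 : T^[k+1] x = T^[k] (T x) := Function.iterate_succ_apply T k x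
      rw [h1]
      exact (ih (T x)).trans (omegaNT_tail hTc hTs x)

/-- Transitive compactness implies topological transitivity. -/
lemma transCompact_trans [Nonempty X] (htc : TransCompact T) :
    ∀ U V : Set X, Opene U → Opene V → ∃ n : ℕ, (U ∩ T^[n] ⁻¹' V).Nonempty := by
  intro U V hU hV
  obtain ⟨x⟩ := (inferInstance : Nonempty X)
  obtain ⟨z, hz⟩ := htc x
  obtain ⟨n, hn⟩ := hz Set.univ isOpen_univ (Set.mem_univ z) U V hU hV
  exact ⟨n, hn.2⟩

/-- Chained transitivity: a common opene set whose points visit each member of a list. -/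
lemma chain_lemma [Nonempty X] (hTc : Continuous T)
    (htrans : ∀ U V : Set X, Opene U → Opene V → ∃ n : ℕ, (U ∩ T^[n] ⁻¹' V).Nonempty) :
    ∀ l : List {U : Set X // Opene U}, ∃ W : Set X, Opene W ∧
      ∀ i ∈ l, ∃ m : ℕ, ∀ w ∈ W, T^[m] w ∈ i.1 := by
  intro l
  induction l with
  | nil => exact ⟨Set.univ, ⟨isOpen_univ, Set.univ_nonempty⟩, by simp⟩
  | cons i l ih =>
      obtain ⟨W', hW', hl⟩ := ih
      obtain ⟨m₀, hm₀⟩ := htrans i.1 W' i.2 hW'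
      refine ⟨i.1 ∩ T^[m₀] ⁻¹' W', ⟨i.2.1.inter (hW'.1.preimage (hTc.iterate m₀)), hm₀⟩, ?_⟩
      intro j hj
      rcases List.mem_cons.mp hj with h | h
      · subst h
        exact ⟨0, fun w hw => by simpa using hw.1⟩
      · obtain ⟨m', hm'⟩ := hl j h
        refine ⟨m' + m₀, fun w hw => ?_⟩
        rw [Function.iterate_add_apply]
        exact hm' _ hw.2

/-- The universal set `Ω* = ⋂_U closure (⋃_{x ∈ U} ω_{N_T}(x))` is nonempty. -/
lemma omegaStar_nonempty [CompactSpace X] [Nonempty X] (hTc : Continuous T)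
    (hTs : Function.Surjective T) (htc : TransCompact T) :
    (⋂ i : {U : Set X // Opene U}, closure (⋃ x ∈ i.1, omegaNT T x)).Nonempty := by
  classical
  by_contra hemp
  rw [Set.not_nonempty_iff_eq_empty] at hemp
  obtain ⟨t, ht⟩ := isCompact_univ.elim_finite_subfamily_closed
    (fun i : {U : Set X // Opene U} => closure (⋃ x ∈ i.1, omegaNT T x))
    (fun _ => isClosed_closure) (by rw [hemp]; simp)
  obtain ⟨W, hW, hWl⟩ := chain_lemma hTc (transCompact_trans htc) t.toList
  obtain ⟨x₀, hx₀⟩ := hW.2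
  have hx : ∀ i ∈ t, ∃ m : ℕ, T^[m] x₀ ∈ i.1 := by
    intro i hi
    obtain ⟨m, hm⟩ := hWl i (Finset.mem_toList.mpr hi)
    exact ⟨m, hm x₀ hx₀⟩
  choose! f hf using hx
  obtain ⟨z, hz⟩ := htc (T^[t.sup f] x₀)
  have hmem : z ∈ Set.univ ∩ ⋂ i ∈ t, closure (⋃ x ∈ i.1, omegaNT T x) := by
    refine ⟨Set.mem_univ z, Set.mem_iInter₂.mpr fun i hi => ?_⟩
    have hfi : f i ≤ t.sup f := Finset.le_sup hi
    have heq : T^[t.sup f] x₀ = T^[t.sup f - f i] (T^[f i] x₀) := by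
      rw [← Function.iterate_add_apply, Nat.sub_add_cancel hfi]
    rw [heq] at hz
    exact subset_closure
      (Set.mem_biUnion (hf i hi) (omegaNT_iterate_tail hTc hTs (t.sup f - f i) (T^[f i] x₀) hz))
  rw [ht] at hmem
  exact hmem

/-- Uniform window continuity. -/
lemma window_lemma [CompactSpace X] (hTc : Continuous T) (N : ℕ) {ε : ℝ} (hε : 0 < ε) :
    ∃ η > 0, ∀ p q : X, dist p q < η → ∀ i ≤ N, dist (T^[i] p) (T^[i] q) < ε := by
  induction N with
  | zero =>
      refine ⟨ε, hε, fun p q h i hi => ?_⟩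
      interval_cases i
      simpa using h
  | succ N ih =>
      obtain ⟨η₁, hη₁, h1⟩ := ih
      have hu : UniformContinuous (T^[N+1]) :=
        CompactSpace.uniformContinuous_of_continuous (hTc.iterate (N+1))
      rw [Metric.uniformContinuous_iff] at hu
      obtain ⟨η₂, hη₂, h2⟩ := hu ε hε
      refine ⟨min η₁ η₂, lt_min hη₁ hη₂, fun p q h i hi => ?_⟩
      rcases Nat.lt_succ_iff_lt_or_eq.mp (Nat.lt_succ_of_le hi) with h' | h'
      · exact h1 p q (h.trans_le (min_le_left _ _)) i (Nat.lt_succ_iff.mp h')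
      · subst h'
        exact h2 (h.trans_le (min_le_right _ _))

/-- If some closed invariant set consists of points inf-proximal to everything,
then every pair is inf-proximal. -/
lemma key_lemma [CompactSpace X] (hTc : Continuous T) {S : Set X} (hScl : IsClosed S)
    (hSinv : ∀ a ∈ S, T a ∈ S) {a₀ : X} (ha₀ : a₀ ∈ S)
    (hP : ∀ c ∈ S, ∀ b : X, ∀ ε : ℝ, 0 < ε → ∃ n, dist (T^[n] c) (T^[n] b) < ε)
    (w₁ w₂ : X) (ε : ℝ) (hε : 0 < ε) :
    ∃ n, dist (T^[n] w₁) (T^[n] w₂) < ε := by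
  classical
  have hSit : ∀ (n : ℕ), ∀ a ∈ S, T^[n] a ∈ S := by
    intro n
    induction n with
    | zero => exact fun a ha => ha
    | succ n ih =>
        intro a ha
        rw [Function.iterate_succ_apply']
        exact hSinv _ (ih a ha)
  have hseq : ∀ k : ℕ, ∃ n, dist (T^[n] a₀) (T^[n] w₁) < 1/((k:ℝ)+1) :=
    fun k => hP a₀ ha₀ w₁ _ (by positivity)
  choose g hg using hseq
  obtain ⟨p, -, φ, hφ, hconv⟩ := isCompact_univ.tendsto_subseq
    (x := fun k => ((T^[g k] a₀, T^[g k] w₂) : X × X)) (fun k => Set.mem_univ _)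
  have hconv1 : Tendsto (fun k => T^[g (φ k)] a₀) atTop (𝓝 p.1) := by
    have := (continuous_fst.tendsto p).comp hconv
    simpa [Function.comp_def] using this
  have hconv2 : Tendsto (fun k => T^[g (φ k)] w₂) atTop (𝓝 p.2) := by
    have := (continuous_snd.tendsto p).comp hconv
    simpa [Function.comp_def] using this
  have hp1 : p.1 ∈ S :=
    hScl.mem_of_tendsto hconv1 (Filter.Eventually.of_forall fun k => hSit _ _ ha₀)
  have hd1 : Tendsto (fun k => dist (T^[g (φ k)] w₁) (T^[g (φ k)] a₀)) atTop (𝓝 0) := by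
    apply squeeze_zero (fun k => dist_nonneg) (fun k => ?_)
      tendsto_one_div_add_atTop_nhds_zero_nat
    rw [dist_comm]
    refine le_trans (hg (φ k)).le (one_div_le_one_div_of_le (by positivity) ?_)
    have hk : k ≤ φ k := hφ.le_apply
    exact_mod_cast Nat.succ_le_succ hk
  have hconv1' : Tendsto (fun k => T^[g (φ k)] w₁) atTop (𝓝 p.1) := by
    rw [tendsto_iff_dist_tendsto_zero]
    apply squeeze_zero (fun k => dist_nonneg)
      (fun k => dist_triangle (T^[g (φ k)] w₁) (T^[g (φ k)] a₀) p.1)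
    simpa using hd1.add (tendsto_iff_dist_tendsto_zero.mp hconv1)
  obtain ⟨m, hm⟩ := hP p.1 hp1 p.2 (ε/2) (by positivity)
  have hcm : Tendsto (fun k => dist (T^[m] (T^[g (φ k)] w₁)) (T^[m] (T^[g (φ k)] w₂))) atTop
      (𝓝 (dist (T^[m] p.1) (T^[m] p.2))) := by
    have hc1 : Tendsto (fun k => T^[m] (T^[g (φ k)] w₁)) atTop (𝓝 (T^[m] p.1)) := by
      have := ((hTc.iterate m).tendsto p.1).comp hconv1'
      simpa [Function.comp_def] using this
    have hc2 : Tendsto (fun k => T^[m] (T^[g (φ k)] w₂)) atTop (𝓝 (T^[m] p.2)) := by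
      have := ((hTc.iterate m).tendsto p.2).comp hconv2
      simpa [Function.comp_def] using this
    exact hc1.dist hc2
  have hev : ∀ᶠ k in atTop,
      dist (T^[m] (T^[g (φ k)] w₁)) (T^[m] (T^[g (φ k)] w₂)) < ε :=
    hcm.eventually_lt_const (by linarith)
  obtain ⟨k, hk⟩ := hev.exists
  refine ⟨m + g (φ k), ?_⟩
  rw [Function.iterate_add_apply, Function.iterate_add_apply]
  exact hk

end Aux
/-- Every transitive compact system that is not proximal is thickly sensitive. -/
theorem stmt1 {X : Type*} [MetricSpace X] [CompactSpace X] [Nontrivial X]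
    (hperf : ∀ x : X, (𝓝[≠] x).NeBot)
    {T : X → X} (hTc : Continuous T) (hTs : Function.Surjective T)
    (htc : TransCompact T) (hnp : ¬ ProximalSystem T) :
    ThicklySensitive T := by
  classical
  -- The universal set Ω*
  set S : Set X := ⋂ i : {U : Set X // Opene U}, closure (⋃ x ∈ i.1, omegaNT T x) with hSdef
  have hSne : S.Nonempty := omegaStar_nonempty hTc hTs htc
  have hScl : IsClosed S := isClosed_iInter fun _ => isClosed_closure
  have hSinv : ∀ a ∈ S, T a ∈ S := by
    intro a ha
    refine Set.mem_iInter.mpr fun i => ?_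
    have hai := Set.mem_iInter.mp ha i
    have himg : T '' (⋃ x ∈ i.1, omegaNT T x) ⊆ ⋃ x ∈ i.1, omegaNT T x := by
      rintro _ ⟨z, hz, rfl⟩
      simp only [Set.mem_iUnion] at hz ⊢
      obtain ⟨x, hx, hzx⟩ := hz
      exact ⟨x, hx, omegaNT_maps hTc hTs hzx⟩
    exact closure_mono himg (image_closure_subset_closure_image hTc (Set.mem_image_of_mem T hai))
  -- Dichotomy
  by_cases hP : ∀ c ∈ S, ∀ b : X, ∀ ε : ℝ, 0 < ε → ∃ n, dist (T^[n] c) (T^[n] b) < ε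
  · -- proximal case: contradiction
    exfalso
    apply hnp
    obtain ⟨a₀, ha₀⟩ := hSne
    intro y₁ y₂
    show liminf (fun n : ℕ => dist (T^[n] y₁) (T^[n] y₂)) atTop = 0
    have key : ∀ ε : ℝ, 0 < ε → ∀ M : ℕ, ∃ n, M ≤ n ∧ dist (T^[n] y₁) (T^[n] y₂) < ε := by
      intro ε hε M
      obtain ⟨n, hn⟩ := key_lemma hTc hScl hSinv ha₀ hP (T^[M] y₁) (T^[M] y₂) ε hε
      rw [← Function.iterate_add_apply, ← Function.iterate_add_apply] at hn
      exact ⟨n + M, Nat.le_add_left _ _, hn⟩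
    have hbddlo : IsBoundedUnder (· ≥ ·) atTop (fun n : ℕ => dist (T^[n] y₁) (T^[n] y₂)) :=
      isBoundedUnder_of ⟨0, fun n => dist_nonneg⟩
    have hbddhi : IsBoundedUnder (· ≤ ·) atTop (fun n : ℕ => dist (T^[n] y₁) (T^[n] y₂)) :=
      isBoundedUnder_of ⟨Metric.diam (Set.univ : Set X), fun n =>
        Metric.dist_le_diam_of_mem isCompact_univ.isBounded (Set.mem_univ _) (Set.mem_univ _)⟩
    refine le_antisymm ?_ (le_liminf_of_le hbddhi.isCoboundedUnder_ge
      (Filter.Eventually.of_forall fun n => dist_nonneg))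
    by_contra hcon
    push_neg at hcon
    have hfreq : ∃ᶠ n in atTop, dist (T^[n] y₁) (T^[n] y₂) ≤
        (liminf (fun n : ℕ => dist (T^[n] y₁) (T^[n] y₂)) atTop) / 2 := by
      rw [Filter.frequently_atTop]
      intro M
      obtain ⟨n, hnM, hn⟩ := key
        ((liminf (fun n : ℕ => dist (T^[n] y₁) (T^[n] y₂)) atTop) / 2) (by linarith) M
      exact ⟨n, hnM, hn.le⟩
    have := Filter.liminf_le_of_frequently_le hfreq hbddlo
    linarith
  · -- sensitive case
    push_neg at hP
    obtain ⟨c, hcS, b, ε, hε, hsep⟩ := hP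
    refine ⟨ε/4, by positivity, ?_⟩
    intro U hU N
    obtain ⟨η, hη, hwin⟩ := window_lemma hTc N (show (0:ℝ) < ε/4 by positivity)
    have hcl : c ∈ closure (⋃ x ∈ U, omegaNT T x) := by
      have := Set.mem_iInter.mp hcS ⟨U, hU⟩
      exact this
    rw [Metric.mem_closure_iff] at hcl
    obtain ⟨z, hzmem, hdcz⟩ := hcl (η/2) (by positivity)
    obtain ⟨x, hxU, hzx⟩ := Set.mem_iUnion₂.mp hzmem
    obtain ⟨n, hn⟩ := hzx (Metric.ball z (η/2)) Metric.isOpen_ball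
      (Metric.mem_ball_self (by positivity)) U (Metric.ball b η) hU
      ⟨Metric.isOpen_ball, ⟨b, Metric.mem_ball_self hη⟩⟩
    obtain ⟨w, hwU, hwb⟩ := hn.2
    have hxz : dist (T^[n] x) z < η/2 := hn.1
    have hxa : dist (T^[n] x) c < η := by
      have h1 : dist (T^[n] x) c ≤ dist (T^[n] x) z + dist z c := dist_triangle _ _ _
      rw [dist_comm z c] at h1
      linarith
    have hwb' : dist (T^[n] w) b < η := hwb
    refine ⟨n, fun i hi => ?_⟩
    have h2 : dist (T^[i] (T^[n] x)) (T^[i] c) < ε/4 := hwin _ _ hxa i hi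
    have h3 : dist (T^[i] (T^[n] w)) (T^[i] b) < ε/4 := hwin _ _ hwb' i hi
    have htri : dist (T^[i] c) (T^[i] b) ≤
        dist (T^[i] c) (T^[i] (T^[n] x)) + dist (T^[i] (T^[n] x)) (T^[i] (T^[n] w)) +
          dist (T^[i] (T^[n] w)) (T^[i] b) := dist_triangle4 _ _ _ _
    have hsep_i := hsep i
    rw [dist_comm (T^[i] c) (T^[i] (T^[n] x))] at htri
    have hlt : ε/4 < dist (T^[i] (T^[n] x)) (T^[i] (T^[n] w)) := by linarith
    refine ⟨x, hxU, w, hwU, ?_⟩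
    rw [add_comm n i, Function.iterate_add_apply, Function.iterate_add_apply]
    exact hlt
end

section
/- For an M-system (X,T), the following three properties are equivalent: (X,T) is thickly syndetically sensitive; (X,T) is multi-sensitive; (X,T) is thickly sensitive. -/
open Filter Topology Set Metric

section Aux

variable {X : Type*}

lemma orbit_mem_minimal [TopologicalSpace X] {T : X → X} {M : Set X}
    (hM : T '' M = M) {q : X} (hq : q ∈ M) : ∀ n, T^[n] q ∈ M := by
  intro n
  induction n with
  | zero => simpa using hq
  | succ n ih =>
    rw [Function.iterate_succ_apply', ← hM]
    exact Set.mem_image_of_mem T ih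

lemma minimal_dense_orbit [MetricSpace X] [CompactSpace X] {T : X → X}
    (hTc : Continuous T) {M : Set X} (hMin : IsMinimalSubset T M)
    {x : X} (hx : x ∈ M) : M ⊆ closure (Set.range fun n : ℕ => T^[n] x) := by
  obtain ⟨hMne, hMcl, hMinv, hmin⟩ := hMin
  set C0 := closure (Set.range fun n : ℕ => T^[n] x) with hC0def
  have hrange : (Set.range fun n : ℕ => T^[n] x) ⊆ M := by
    rintro _ ⟨n, rfl⟩; exact orbit_mem_minimal hMinv hx n
  have hC0M : C0 ⊆ M := closure_minimal hrange hMcl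
  set S : Set (Set X) := {C | C.Nonempty ∧ IsClosed C ∧ C ⊆ C0 ∧ T '' C ⊆ C} with hSdef
  have hC0S : C0 ∈ S := by
    refine ⟨⟨x, subset_closure ⟨0, rfl⟩⟩, isClosed_closure, le_refl _, ?_⟩
    refine (image_closure_subset_closure_image hTc).trans (closure_mono ?_)
    rintro _ ⟨_, ⟨n, rfl⟩, rfl⟩
    exact ⟨n + 1, by simpa using Function.iterate_succ_apply' T n x⟩
  have hchain : ∀ c ⊆ S, IsChain (· ⊆ ·) c → c.Nonempty →
      ∃ lb ∈ S, ∀ s ∈ c, lb ⊆ s := by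
    intro c hcS hc hcne
    haveI : Nonempty c := hcne.to_subtype
    have hdir : DirectedOn (· ⊇ ·) c := by
      intro a ha b hb
      rcases hc.total ha hb with h | h
      · exact ⟨a, ha, le_refl _, h⟩
      · exact ⟨b, hb, h, le_refl _⟩
    have hlbne : (⋂₀ c).Nonempty := by
      refine IsCompact.nonempty_sInter_of_directed_nonempty_isCompact_isClosed hdir
        (fun u hu => (hcS hu).1) (fun u hu => (hcS hu).2.1.isCompact)
        (fun u hu => (hcS hu).2.1)
    obtain ⟨s0, hs0⟩ := hcne
    refine ⟨⋂₀ c, ⟨hlbne, isClosed_sInter (fun u hu => (hcS hu).2.1), ?_, ?_⟩,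
      fun s hs => Set.sInter_subset_of_mem hs⟩
    · exact (Set.sInter_subset_of_mem hs0).trans (hcS hs0).2.2.1
    · rintro _ ⟨z, hz, rfl⟩
      exact Set.mem_sInter.2 fun u hu => (hcS hu).2.2.2 ⟨z, Set.mem_sInter.1 hz u hu, rfl⟩
  obtain ⟨Cm, hCmC0, hCmmin⟩ := zorn_superset_nonempty S hchain C0 hC0S
  obtain ⟨⟨hCmne, hCmcl, hCmsub, hCminv⟩, hCmleast⟩ := hCmmin
  have hTCm : T '' Cm = Cm := by
    have hmem : T '' Cm ∈ S := by
      refine ⟨hCmne.image T, (hCmcl.isCompact.image hTc).isClosed, hCminv.trans hCmsub, ?_⟩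
      exact Set.image_mono hCminv
    exact Set.Subset.antisymm hCminv (hCmleast hmem hCminv)
  have hCmM : Cm = M := hmin Cm (hCmsub.trans hC0M) hCmne hCmcl hTCm
  calc M = Cm := hCmM.symm
    _ ⊆ C0 := hCmsub

lemma minimal_return_syndetic [MetricSpace X] [CompactSpace X] {T : X → X}
    (hTc : Continuous T) {q : X} (hq : IsMinimalPoint T q)
    {G : Set X} (hG : IsOpen G) (hqG : q ∈ G) : SyndeticSet (NTpt T q G) := by
  obtain ⟨M, hMin, hqM⟩ := hq
  have hcov : M ⊆ ⋃ n : ℕ, T^[n] ⁻¹' G := by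
    intro x hx
    have hqcl : q ∈ closure (Set.range fun n : ℕ => T^[n] x) :=
      minimal_dense_orbit hTc hMin hx hqM
    obtain ⟨_, hyG, ⟨n, rfl⟩⟩ := _root_.mem_closure_iff.1 hqcl G hG hqG
    exact Set.mem_iUnion.2 ⟨n, hyG⟩
  have hMc : IsCompact M := hMin.2.1.isCompact
  obtain ⟨t, ht⟩ := hMc.elim_finite_subcover (fun n : ℕ => T^[n] ⁻¹' G)
    (fun n => hG.preimage (hTc.iterate n)) hcov
  refine ⟨t.sup id, fun i => ?_⟩
  have hTiq : T^[i] q ∈ M := orbit_mem_minimal hMin.2.2.1 hqM i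
  obtain ⟨n, hn, hnG⟩ : ∃ n ∈ t, T^[i] q ∈ T^[n] ⁻¹' G := by
    simpa using ht hTiq
  refine ⟨n, Finset.le_sup (f := id) hn, ?_⟩
  show T^[i + n] q ∈ G
  rw [Nat.add_comm, Function.iterate_add_apply]
  exact hnG

lemma chain_lemma_s2 [TopologicalSpace X] {T : X → X} (hTc : Continuous T)
    (hT : TopTransitive T) :
    ∀ (r : ℕ) (V : ℕ → Set X), (∀ i, i < r → Opene (V i)) →
    ∀ U : Set X, Opene U → ∃ O : Set X, Opene O ∧ O ⊆ U ∧
      ∃ t : ℕ → ℕ, ∀ i, i < r → O ⊆ T^[t i] ⁻¹' (V i) := by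
  intro r
  induction r with
  | zero =>
    intro V _ U hU
    exact ⟨U, hU, le_refl _, fun _ => 0, fun i hi => absurd hi (Nat.not_lt_zero i)⟩
  | succ r ih =>
    intro V hV U hU
    obtain ⟨O', hO', hO'U, t', ht'⟩ :=
      ih V (fun i hi => hV i (hi.trans (Nat.lt_succ_self r))) U hU
    obtain ⟨n, hn⟩ := hT O' (V r) hO' (hV r (Nat.lt_succ_self r))
    refine ⟨O' ∩ T^[n] ⁻¹' (V r),
      ⟨hO'.1.inter (((hV r (Nat.lt_succ_self r)).1).preimage (hTc.iterate n)), hn⟩,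
      (Set.inter_subset_left).trans hO'U,
      fun i => if i = r then n else t' i, fun i hi => ?_⟩
    by_cases hir : i = r
    · subst hir; simpa using Set.inter_subset_right
    · have hilt : i < r := by omega
      simp only [if_neg hir]
      exact Set.inter_subset_left.trans (ht' i hilt)

lemma msystem_inter_syndetic [MetricSpace X] [CompactSpace X] {T : X → X}
    (hTc : Continuous T) (hM : MSystem T) {U : Set X} (hU : Opene U)
    (r : ℕ) (V : ℕ → Set X) (hV : ∀ i, i < r → Opene (V i) ∧ V i ⊆ U) :
    ∃ K : ℕ, ∀ i : ℕ, ∃ j ≤ K, ∀ l, l < r → (U ∩ T^[i + j] ⁻¹' (V l)).Nonempty := by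
  obtain ⟨O, hO, hOU, t, ht⟩ := chain_lemma_s2 hTc hM.1 r V (fun i hi => (hV i hi).1) U hU
  obtain ⟨q, hqmin, hqO⟩ := hM.2.exists_mem_open hO.1 hO.2
  obtain ⟨K, hK⟩ := minimal_return_syndetic hTc hqmin hO.1 hqO
  obtain ⟨a0, ha0K, ha0⟩ := hK 0
  have ha0' : T^[a0] q ∈ O := by simpa [NTpt] using ha0
  refine ⟨K, fun i => ?_⟩
  obtain ⟨j, hjK, hj⟩ := hK (i + a0)
  have hj' : T^[i + a0 + j] q ∈ O := hj
  refine ⟨j, hjK, fun l hl => ?_⟩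
  refine ⟨T^[a0 + t l] q, ?_, ?_⟩
  · have : T^[a0 + t l] q ∈ V l := by
      rw [Nat.add_comm, Function.iterate_add_apply]
      exact ht l hl ha0'
    exact (hV l hl).2 this
  · show T^[i + j] (T^[a0 + t l] q) ∈ V l
    have he : T^[i + j] (T^[a0 + t l] q) = T^[t l] (T^[i + a0 + j] q) := by
      rw [← Function.iterate_add_apply, ← Function.iterate_add_apply]
      congr 1
      omega
    rw [he]
    exact ht l hl hj'

lemma tss_to_ts [MetricSpace X] {T : X → X} (h : ThicklySyndeticallySensitive T) :
    ThicklySensitive T := by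
  obtain ⟨δ, hδ, h⟩ := h
  refine ⟨δ, hδ, fun U hU N => ?_⟩
  obtain ⟨K, hK⟩ := h U hU N
  obtain ⟨j, _, hmem⟩ := hK 0
  exact ⟨0 + j, hmem⟩

lemma ts_to_ms [MetricSpace X] [Nonempty X] {T : X → X} (hTc : Continuous T)
    (hT : TopTransitive T) (h : ThicklySensitive T) : MultiSensitive T := by
  obtain ⟨δ, hδ, h⟩ := h
  refine ⟨δ, hδ, fun k U hU => ?_⟩
  set V : ℕ → Set X := fun i => if hi : i < k + 1 then U ⟨i, hi⟩ else Set.univ with hVdef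
  have hV : ∀ i, i < k + 1 → Opene (V i) := by
    intro i hi
    simp only [hVdef, dif_pos hi]
    exact hU _
  obtain ⟨O, hO, _, t, ht⟩ := chain_lemma_s2 hTc hT (k + 1) V hV Set.univ
    ⟨isOpen_univ, Set.univ_nonempty⟩
  set tmax := (Finset.range (k + 1)).sup t with htmax
  obtain ⟨m, hm⟩ := h O hO tmax
  refine ⟨m, Set.mem_iInter.2 fun i => ?_⟩
  have hti : t i ≤ tmax := Finset.le_sup (Finset.mem_range.2 i.isLt)
  obtain ⟨x, hx, y, hy, hd⟩ := hm (t (i : ℕ)) hti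
  have hxU : T^[t (i : ℕ)] x ∈ U i := by
    have := ht (i : ℕ) i.isLt hx
    simpa only [hVdef, dif_pos i.isLt, Fin.eta, Set.mem_preimage] using this
  have hyU : T^[t (i : ℕ)] y ∈ U i := by
    have := ht (i : ℕ) i.isLt hy
    simpa only [hVdef, dif_pos i.isLt, Fin.eta, Set.mem_preimage] using this
  refine ⟨T^[t (i : ℕ)] x, hxU, T^[t (i : ℕ)] y, hyU, ?_⟩
  rw [← Function.iterate_add_apply, ← Function.iterate_add_apply]
  exact hd

lemma ms_to_ts [MetricSpace X] {T : X → X} (hTc : Continuous T)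
    (hTs : Function.Surjective T) (h : MultiSensitive T) : ThicklySensitive T := by
  obtain ⟨δ, hδ, h⟩ := h
  refine ⟨δ, hδ, fun U hU N => ?_⟩
  obtain ⟨x0, hx0⟩ := hU.2
  set B : Set X := ⋂ j : Fin (N + 1), T^[(j : ℕ)] ⁻¹' (Metric.ball (T^[(j : ℕ)] x0) (δ / 2))
    with hBdef
  have hBopen : IsOpen B :=
    isOpen_iInter_of_finite fun j => Metric.isOpen_ball.preimage (hTc.iterate _)
  have hx0B : x0 ∈ B := Set.mem_iInter.2 fun j => by
    simp only [Set.mem_preimage, Metric.mem_ball, dist_self]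
    linarith
  set W : Fin (N + 2) → Set X := fun i => if (i : ℕ) < N + 1 then T^[(i : ℕ)] ⁻¹' U else B
    with hWdef
  have hW : ∀ i, Opene (W i) := by
    intro i
    by_cases hi : (i : ℕ) < N + 1
    · simp only [hWdef, if_pos hi]
      refine ⟨hU.1.preimage (hTc.iterate _), ?_⟩
      obtain ⟨z, hz⟩ := (hTs.iterate (i : ℕ)) x0
      exact ⟨z, by simp [Set.mem_preimage, hz, hx0]⟩
    · simp only [hWdef, if_neg hi]
      exact ⟨hBopen, ⟨x0, hx0B⟩⟩
  obtain ⟨n, hn⟩ := h (N + 1) W hW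
  have hnmem : ∀ i : Fin (N + 2), n ∈ STset T (W i) δ := fun i => Set.mem_iInter.1 hn i
  have hnN : N + 1 ≤ n := by
    by_contra hcon
    push_neg at hcon
    obtain ⟨x, hx, y, hy, hd⟩ := hnmem ⟨N + 1, by omega⟩
    have hxB : x ∈ B := by simpa [hWdef] using hx
    have hyB : y ∈ B := by simpa [hWdef] using hy
    have hxd : dist (T^[n] x) (T^[n] x0) < δ / 2 := by
      have := Set.mem_iInter.1 hxB ⟨n, hcon⟩
      simpa using this
    have hyd : dist (T^[n] y) (T^[n] x0) < δ / 2 := by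
      have := Set.mem_iInter.1 hyB ⟨n, hcon⟩
      simpa using this
    have := dist_triangle (T^[n] x) (T^[n] x0) (T^[n] y)
    rw [dist_comm (T^[n] x0) (T^[n] y)] at this
    linarith
  refine ⟨n - N, fun i hi => ?_⟩
  obtain ⟨x, hx, y, hy, hd⟩ := hnmem ⟨N - i, by omega⟩
  have hxU : T^[N - i] x ∈ U := by
    have hlt : N - i < N + 1 := by omega
    simpa [hWdef, if_pos hlt] using hx
  have hyU : T^[N - i] y ∈ U := by
    have hlt : N - i < N + 1 := by omega
    simpa [hWdef, if_pos hlt] using hy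
  refine ⟨T^[N - i] x, hxU, T^[N - i] y, hyU, ?_⟩
  rw [← Function.iterate_add_apply, ← Function.iterate_add_apply]
  have he : n - N + i + (N - i) = n := by omega
  rw [he]
  exact hd

lemma ts_to_tss [MetricSpace X] [CompactSpace X] [Nonempty X] {T : X → X}
    (hTc : Continuous T) (hM : MSystem T) (h : ThicklySensitive T) :
    ThicklySyndeticallySensitive T := by
  obtain ⟨δ, hδ, h⟩ := h
  refine ⟨δ / 2, by linarith, fun U hU N => ?_⟩
  obtain ⟨m0, hm0⟩ := h U hU N
  have hxy : ∀ j : ℕ, j ≤ N → ∃ p : X × X, p.1 ∈ U ∧ p.2 ∈ U ∧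
      δ < dist (T^[m0 + j] p.1) (T^[m0 + j] p.2) := by
    intro j hj
    obtain ⟨x, hx, y, hy, hd⟩ := hm0 j hj
    exact ⟨(x, y), hx, hy, hd⟩
  choose! p hp1 hp2 hpd using hxy
  set Xs : ℕ → Set X := fun j =>
    U ∩ T^[m0 + j] ⁻¹' (Metric.ball (T^[m0 + j] (p j).1) (δ / 8)) with hXsdef
  set Ys : ℕ → Set X := fun j =>
    U ∩ T^[m0 + j] ⁻¹' (Metric.ball (T^[m0 + j] (p j).2) (δ / 8)) with hYsdef
  set V : ℕ → Set X := fun i => if i % 2 = 0 then Xs (i / 2) else Ys (i / 2) with hVdef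
  have hV : ∀ i, i < 2 * (N + 1) → Opene (V i) ∧ V i ⊆ U := by
    intro i hi
    have hl : i / 2 ≤ N := by omega
    by_cases hpar : i % 2 = 0
    · simp only [hVdef, if_pos hpar]
      refine ⟨⟨hU.1.inter (Metric.isOpen_ball.preimage (hTc.iterate _)), ?_⟩,
        Set.inter_subset_left⟩
      refine ⟨(p (i / 2)).1, hp1 _ hl, ?_⟩
      simp only [Set.mem_preimage, Metric.mem_ball, dist_self]
      linarith
    · simp only [hVdef, if_neg hpar]
      refine ⟨⟨hU.1.inter (Metric.isOpen_ball.preimage (hTc.iterate _)), ?_⟩,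
        Set.inter_subset_left⟩
      refine ⟨(p (i / 2)).2, hp2 _ hl, ?_⟩
      simp only [Set.mem_preimage, Metric.mem_ball, dist_self]
      linarith
  obtain ⟨K, hK⟩ := msystem_inter_syndetic hTc hM hU (2 * (N + 1)) V hV
  refine ⟨K + m0, fun i => ?_⟩
  obtain ⟨j, hjK, hj⟩ := hK i
  refine ⟨j + m0, by omega, ?_⟩
  intro l hl
  have hXl := hj (2 * l) (by omega)
  have hYl := hj (2 * l + 1) (by omega)
  have hVX : V (2 * l) = Xs l := by
    have h1 : 2 * l % 2 = 0 := by omega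
    have h2 : 2 * l / 2 = l := by omega
    simp only [hVdef, if_pos h1, h2]
  have hVY : V (2 * l + 1) = Ys l := by
    have h1 : ¬((2 * l + 1) % 2 = 0) := by omega
    have h2 : (2 * l + 1) / 2 = l := by omega
    simp only [hVdef, if_neg h1, h2]
  rw [hVX] at hXl
  rw [hVY] at hYl
  obtain ⟨u, huU, huX⟩ := hXl
  obtain ⟨v, hvU, hvY⟩ := hYl
  have huX' : T^[i + j] u ∈ Xs l := huX
  have hvY' : T^[i + j] v ∈ Ys l := hvY
  have h1 : dist (T^[m0 + l] (T^[i + j] u)) (T^[m0 + l] (p l).1) < δ / 8 := huX'.2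
  have h2 : dist (T^[m0 + l] (T^[i + j] v)) (T^[m0 + l] (p l).2) < δ / 8 := hvY'.2
  have h3 : δ < dist (T^[m0 + l] (p l).1) (T^[m0 + l] (p l).2) := hpd l hl
  refine ⟨u, huU, v, hvU, ?_⟩
  have he : ∀ w : X, T^[i + (j + m0) + l] w = T^[m0 + l] (T^[i + j] w) := by
    intro w
    rw [← Function.iterate_add_apply]
    congr 1
    omega
  rw [he u, he v]
  have h4 := dist_triangle4 (T^[m0 + l] (p l).1) (T^[m0 + l] (T^[i + j] u))
    (T^[m0 + l] (T^[i + j] v)) (T^[m0 + l] (p l).2)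
  have h5 := dist_comm (T^[m0 + l] (p l).1) (T^[m0 + l] (T^[i + j] u))
  have h6 := dist_comm (T^[m0 + l] (T^[i + j] v)) (T^[m0 + l] (p l).2)
  linarith
end Aux

/-- For an M-system, thickly syndetical sensitivity, multi-sensitivity and
thick sensitivity are all equivalent. -/
theorem stmt2 {X : Type*} [MetricSpace X] [CompactSpace X] [Nontrivial X]
    (hperf : ∀ x : X, (𝓝[≠] x).NeBot)
    {T : X → X} (hTc : Continuous T) (hTs : Function.Surjective T)
    (hM : MSystem T) :
    (ThicklySyndeticallySensitive T ↔ MultiSensitive T) ∧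
    (MultiSensitive T ↔ ThicklySensitive T) := by
  have hA : ThicklySensitive T → MultiSensitive T := ts_to_ms hTc hM.1
  have hB : MultiSensitive T → ThicklySensitive T := ms_to_ts hTc hTs
  have hC : ThicklySensitive T → ThicklySyndeticallySensitive T := ts_to_tss hTc hM
  have hD : ThicklySyndeticallySensitive T → ThicklySensitive T := tss_to_ts
  exact ⟨⟨fun h => hA (hD h), fun h => hC (hB h)⟩, ⟨hB, hA⟩⟩
end

section
/- There exists a dynamical system (X,T) that is transitive compact but not totally transitive; moreover, there exists such a system that is additionally not proximal. -/
open Filter Topology Set Metric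

namespace St3

abbrev Seq := ℕ → Fin 3

noncomputable instance : MetricSpace Seq := PiNat.metricSpace

instance : CompactSpace Seq := by infer_instance

def Ev (x : Seq) (i : ℕ) : Prop := x i = 1 ∨ (x i = 2 ∧ x (i+1) ≠ 2)

instance (x : Seq) (i : ℕ) : Decidable (Ev x i) := by unfold Ev; infer_instance

def cnt (x : Seq) (a b : ℕ) : ℕ := ((Finset.Ico a b).filter (fun i => Ev x i)).card

def Wd (k : ℕ) : ℕ := (k+2) * 2^k

lemma Wd_strictMono : StrictMono Wd := by
  apply strictMono_nat_of_lt_succ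
  intro k
  have h1 : (0:ℕ) < 2^k := Nat.pow_pos (by norm_num)
  unfold Wd
  rw [pow_succ]
  nlinarith [h1]

lemma Wd_pos (k : ℕ) : 1 ≤ Wd k := by
  have h1 : (0:ℕ) < 2^k := Nat.pow_pos (by norm_num)
  have : 0 < (k+2) * 2^k := Nat.mul_pos (by omega) h1
  unfold Wd; omega

def RuleP (x : Seq) : Prop := ∀ i j, x i = 1 → x j = 1 → i % 2 = j % 2
def RuleW (x : Seq) : Prop := ∀ a k, cnt x a (a + Wd k) ≤ k + 2
def Good (x : Seq) : Prop := RuleP x ∧ RuleW x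

def Y : Type := {x : Seq // Good x}

noncomputable instance : MetricSpace Y := by unfold Y; infer_instance

def shf : Seq → Seq := fun x i => x (i+1)

lemma continuous_shf : Continuous shf := continuous_pi fun i => continuous_apply (i+1)

lemma fin3 (a : Fin 3) : a = 0 ∨ a = 1 ∨ a = 2 := by revert a; decide

/-- counting transport -/
lemma cnt_le_rule {x y : Seq} (hy : RuleW y) {a k t : ℕ}
    (h : ∀ j, a ≤ j → j < a + Wd k → Ev x j → t ≤ j ∧ Ev y (j - t)) :
    cnt x a (a + Wd k) ≤ k + 2 := by
  have key : cnt x a (a + Wd k) ≤ cnt y (a - t) (a - t + Wd k) := by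
    unfold cnt
    apply Finset.card_le_card_of_injOn (fun j => j - t)
    · intro j hj
      simp only [Finset.mem_coe, Finset.mem_filter, Finset.mem_Ico] at hj ⊢
      obtain ⟨⟨hj1, hj2⟩, hj3⟩ := hj
      obtain ⟨ht, hev⟩ := h j hj1 hj2 hj3
      exact ⟨⟨by omega, by omega⟩, hev⟩
    · intro j1 hj1 j2 hj2 heq
      simp only [Finset.coe_filter, Set.mem_setOf_eq, Finset.mem_Ico] at hj1 hj2
      have h1 := h j1 hj1.1.1 hj1.1.2 hj1.2
      have h2 := h j2 hj2.1.1 hj2.1.2 hj2.2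
      have heq' : j1 - t = j2 - t := heq
      omega
  exact key.trans (hy _ _)

lemma cnt_le_singleton {x : Seq} {a b e : ℕ} (h : ∀ j, a ≤ j → j < b → Ev x j → j = e) :
    cnt x a b ≤ 1 := by
  unfold cnt
  apply Finset.card_le_one.2
  intro i hi j hj
  simp only [Finset.mem_filter, Finset.mem_Ico] at hi hj
  rw [h i hi.1.1 hi.1.2 hi.2, h j hj.1.1 hj.1.2 hj.2]

lemma good_shf {x : Seq} (hx : Good x) : Good (shf x) := by
  constructor
  · intro i j hi hj
    have := hx.1 (i+1) (j+1) hi hj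
    omega
  · intro a k
    have hle : cnt (shf x) a (a + Wd k) ≤ cnt x (a+1) (a + Wd k + 1) := by
      unfold cnt
      apply Finset.card_le_card_of_injOn (fun j => j + 1)
      · intro j hj
        simp only [Finset.mem_coe, Finset.mem_filter, Finset.mem_Ico] at hj ⊢
        exact ⟨⟨by omega, by omega⟩, hj.2⟩
      · intro j1 _ j2 _ heq
        have heq' : j1 + 1 = j2 + 1 := heq
        omega
    have h2 := hx.2 (a+1) k
    rw [show a + 1 + Wd k = a + Wd k + 1 by omega] at h2
    exact hle.trans h2

def T : Y → Y := fun x => ⟨shf x.1, good_shf x.2⟩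

lemma continuous_T : Continuous T :=
  Continuous.subtype_mk (continuous_shf.comp continuous_subtype_val) _

lemma iter_apply (n : ℕ) (x : Y) (i : ℕ) : (T^[n] x).1 i = x.1 (i + n) := by
  induction n generalizing x with
  | zero => rfl
  | succ m ih =>
    rw [Function.iterate_succ_apply]
    rw [ih (T x)]
    show x.1 (i + m + 1) = x.1 (i + (m+1))
    congr 1

/-- prepend -/
def cons (a : Fin 3) (x : Seq) : Seq := fun i => if i = 0 then a else x (i-1)

lemma cons_succ (a : Fin 3) (x : Seq) (i : ℕ) : cons a x (i+1) = x i := by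
  simp [cons]

lemma ev_cons {a : Fin 3} {x : Seq} (i : ℕ) : Ev (cons a x) (i+1) ↔ Ev x i := by
  unfold Ev
  rw [cons_succ, show i + 1 + 1 = (i+1)+1 from rfl, cons_succ]

lemma good_cons {x : Seq} (hx : Good x) (a : Fin 3) (ha : a ≠ 1)
    (h0 : ¬(a = 2 ∧ x 0 ≠ 2)) : Good (cons a x) := by
  constructor
  · intro i j hi hj
    rcases Nat.eq_zero_or_pos i with rfl | hi'
    · simp [cons] at hi; exact absurd hi ha
    rcases Nat.eq_zero_or_pos j with rfl | hj'
    · simp [cons] at hj; exact absurd hj ha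
    have hii : i - 1 + 1 = i := by omega
    have hjj : j - 1 + 1 = j := by omega
    have h1 : x (i-1) = 1 := by rw [← cons_succ a x (i-1), hii]; exact hi
    have h2 : x (j-1) = 1 := by rw [← cons_succ a x (j-1), hjj]; exact hj
    have := hx.1 _ _ h1 h2
    omega
  · intro b k
    apply cnt_le_rule hx.2 (t := 1)
    intro j _ _ hje
    rcases Nat.eq_zero_or_pos j with rfl | hj'
    · exfalso
      have hc0 : cons a x 0 = a := by simp [cons]
      have hc1 : cons a x 1 = x 0 := cons_succ a x 0
      unfold Ev at hje
      rw [hc0, hc1] at hje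
      rcases hje with h | h
      · exact ha h
      · exact h0 h
    · refine ⟨by omega, ?_⟩
      have : j - 1 + 1 = j := by omega
      rw [← ev_cons (a := a) (x := x) (j-1), this]
      exact hje

lemma T_surjective : Function.Surjective T := by
  intro x
  by_cases h : x.1 0 = 2
  · refine ⟨⟨cons 2 x.1, good_cons x.2 2 (by decide) (by simp [h])⟩, ?_⟩
    apply Subtype.ext
    funext i
    exact cons_succ 2 x.1 i
  · refine ⟨⟨cons 0 x.1, good_cons x.2 0 (by decide) (by simp)⟩, ?_⟩
    apply Subtype.ext
    funext i
    exact cons_succ 0 x.1 i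

/-- cylinders are neighborhoods -/
lemma exists_cyl {U : Set Y} (hU : IsOpen U) {p : Y} (hp : p ∈ U) :
    ∃ N, ∀ y : Y, (∀ i < N, y.1 i = p.1 i) → y ∈ U := by
  obtain ⟨ε, hε, hball⟩ := Metric.isOpen_iff.1 hU p hp
  obtain ⟨N, hN⟩ : ∃ N : ℕ, (1/2 : ℝ)^N < ε := exists_pow_lt_of_lt_one hε (by norm_num)
  refine ⟨N, fun y hy => hball ?_⟩
  rw [Metric.mem_ball]; change dist y.1 p.1 < ε
  have : y.1 ∈ PiNat.cylinder p.1 N := PiNat.mem_cylinder_iff.2 hy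
  exact lt_of_le_of_lt (PiNat.mem_cylinder_iff_dist_le.1 this) hN

lemma dist_le_of_cyl {x y : Y} {N : ℕ} (h : ∀ i < N, y.1 i = x.1 i) :
    dist y x ≤ (1/2 : ℝ)^N := by
  change dist y.1 x.1 ≤ _
  exact PiNat.mem_cylinder_iff_dist_le.1 (PiNat.mem_cylinder_iff.2 h)

lemma isOpen_cylY (w : Seq) (N : ℕ) : IsOpen {y : Y | ∀ i < N, y.1 i = w i} := by
  rw [Metric.isOpen_iff]
  intro y hy
  refine ⟨(1/2:ℝ)^N, by positivity, ?_⟩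
  intro y' hy'
  intro i hi
  rw [Metric.mem_ball] at hy'; change dist y'.1 y.1 < _ at hy'
  have := PiNat.apply_eq_of_dist_lt hy' (le_of_lt hi)
  rw [this]
  exact hy i hi

/-- closedness of Good, compactness -/
lemma cnt_congr {x y : Seq} {a b : ℕ} (h : ∀ i ≤ b, y i = x i) : cnt y a b = cnt x a b := by
  unfold cnt
  congr 1
  apply Finset.filter_congr
  intro i hi
  simp only [Finset.mem_Ico] at hi
  unfold Ev
  rw [h i (by omega), h (i+1) (by omega)]

lemma isClosed_good : IsClosed {x : Seq | Good x} := by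
  rw [← isOpen_compl_iff]
  rw [Metric.isOpen_iff]
  intro x hx
  simp only [Set.mem_compl_iff, Set.mem_setOf_eq] at hx
  unfold Good at hx
  rw [not_and_or] at hx
  rcases hx with hP | hW
  · unfold RuleP at hP
    push_neg at hP
    obtain ⟨i, j, hi, hj, hne⟩ := hP
    refine ⟨(1/2:ℝ)^(max i j + 1), by positivity, fun y hy => ?_⟩
    rw [Metric.mem_ball, dist_comm] at hy
    simp only [Set.mem_compl_iff, Set.mem_setOf_eq]
    intro hgood
    have h1 : x i = y i := PiNat.apply_eq_of_dist_lt hy (show i ≤ max i j + 1 by omega)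
    have h2 : x j = y j := PiNat.apply_eq_of_dist_lt hy (show j ≤ max i j + 1 by omega)
    exact hne (hgood.1 i j (by rw [← h1]; exact hi) (by rw [← h2]; exact hj))
  · unfold RuleW at hW
    push_neg at hW
    obtain ⟨a, k, hak⟩ := hW
    refine ⟨(1/2:ℝ)^(a + Wd k + 1), by positivity, fun y hy => ?_⟩
    rw [Metric.mem_ball, dist_comm] at hy
    simp only [Set.mem_compl_iff, Set.mem_setOf_eq]
    intro hgood
    have hagree : ∀ i ≤ a + Wd k, y i = x i := by
      intro i hile
      exact (PiNat.apply_eq_of_dist_lt hy (show i ≤ a + Wd k + 1 by omega)).symm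
    have := cnt_congr (x := x) (y := y) (a := a) (b := a + Wd k) hagree
    have h2 := hgood.2 a k
    omega

instance : CompactSpace Y := by
  have h : IsCompact {x : Seq | Good x} := isClosed_good.isCompact
  exact isCompact_iff_compactSpace.mp h


/-! ### the witness construction -/

def wit (p q : Seq) (L n D : ℕ) : Seq := fun j =>
  if j < L then p j
  else if j < L + D then 2
  else if j < n then 0
  else if j < n + L then q (j - n)
  else if j < n + L + D then 2
  else 0

variable (p q : Seq) (L n D : ℕ)

lemma wit_r1 {j : ℕ} (h : j < L) : wit p q L n D j = p j := by
  simp only [wit]; rw [if_pos h]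

lemma wit_r2 {j : ℕ} (h1 : L ≤ j) (h2 : j < L + D) : wit p q L n D j = 2 := by
  simp only [wit]; rw [if_neg (by omega), if_pos h2]

lemma wit_r3 {j : ℕ} (h1 : L + D ≤ j) (h2 : j < n) : wit p q L n D j = 0 := by
  simp only [wit]; rw [if_neg (by omega), if_neg (by omega), if_pos h2]

lemma wit_r4 (hn : L + 2*D ≤ n) (hD : 1 ≤ D) {j : ℕ} (h1 : n ≤ j) (h2 : j < n + L) :
    wit p q L n D j = q (j - n) := by
  simp only [wit]
  rw [if_neg (by omega), if_neg (by omega), if_neg (by omega), if_pos h2]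

lemma wit_r5 (hn : L + 2*D ≤ n) (hD : 1 ≤ D) {j : ℕ} (h1 : n + L ≤ j) (h2 : j < n + L + D) :
    wit p q L n D j = 2 := by
  simp only [wit]
  rw [if_neg (by omega), if_neg (by omega), if_neg (by omega), if_neg (by omega), if_pos h2]

lemma wit_r6 (hn : L + 2*D ≤ n) (hD : 1 ≤ D) {j : ℕ} (h1 : n + L + D ≤ j) :
    wit p q L n D j = 0 := by
  simp only [wit]
  rw [if_neg (by omega), if_neg (by omega), if_neg (by omega), if_neg (by omega),
    if_neg (by omega)]

lemma ev_wit (hL : 1 ≤ L) (hD : 1 ≤ D) (hn : L + 2*D ≤ n) {j : ℕ}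
    (hj : Ev (wit p q L n D) j) :
    (j < L ∧ Ev p j) ∨ j = L + D - 1 ∨ (n ≤ j ∧ j < n + L ∧ Ev q (j - n)) ∨
      j = n + L + D - 1 := by
  by_cases c1 : j < L
  · left
    refine ⟨c1, ?_⟩
    by_cases c1' : j + 1 < L
    · unfold Ev at hj ⊢
      rw [wit_r1 p q L n D c1, wit_r1 p q L n D c1'] at hj
      exact hj
    · have hw1 : wit p q L n D j = p j := wit_r1 _ _ _ _ _ c1
      have hw2 : wit p q L n D (j+1) = 2 := wit_r2 _ _ _ _ _ (by omega) (by omega)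
      unfold Ev at hj
      rw [hw1, hw2] at hj
      rcases hj with h | ⟨_, hne⟩
      · exact Or.inl h
      · exact absurd rfl hne
  by_cases c2 : j < L + D
  · right; left
    by_contra hne
    have hw1 : wit p q L n D j = 2 := wit_r2 _ _ _ _ _ (by omega) c2
    have hw2 : wit p q L n D (j+1) = 2 := wit_r2 _ _ _ _ _ (by omega) (by omega)
    unfold Ev at hj
    rw [hw1, hw2] at hj
    rcases hj with h | ⟨_, hne2⟩
    · exact absurd h (by decide)
    · exact absurd rfl hne2
  by_cases c3 : j < n
  · exfalso
    have hw1 : wit p q L n D j = 0 := wit_r3 _ _ _ _ _ (by omega) c3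
    unfold Ev at hj
    rw [hw1] at hj
    rcases hj with h | ⟨h, _⟩ <;> exact absurd h (by decide)
  by_cases c4 : j < n + L
  · right; right; left
    refine ⟨by omega, c4, ?_⟩
    by_cases c4' : j + 1 < n + L
    · have hw1 : wit p q L n D j = q (j - n) := wit_r4 _ _ _ _ _ hn hD (by omega) c4
      have hw2 : wit p q L n D (j+1) = q (j + 1 - n) := wit_r4 _ _ _ _ _ hn hD (by omega) c4'
      unfold Ev at hj ⊢
      rw [hw1, hw2] at hj
      rw [show j + 1 - n = (j - n) + 1 by omega] at hj
      exact hj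
    · have hw1 : wit p q L n D j = q (j - n) := wit_r4 _ _ _ _ _ hn hD (by omega) c4
      have hw2 : wit p q L n D (j+1) = 2 := wit_r5 _ _ _ _ _ hn hD (by omega) (by omega)
      unfold Ev at hj
      rw [hw1, hw2] at hj
      rcases hj with h | ⟨_, hne⟩
      · exact Or.inl h
      · exact absurd rfl hne
  by_cases c5 : j < n + L + D
  · right; right; right
    by_contra hne
    have hw1 : wit p q L n D j = 2 := wit_r5 _ _ _ _ _ hn hD (by omega) c5
    have hw2 : wit p q L n D (j+1) = 2 := wit_r5 _ _ _ _ _ hn hD (by omega) (by omega)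
    unfold Ev at hj
    rw [hw1, hw2] at hj
    rcases hj with h | ⟨_, hne2⟩
    · exact absurd h (by decide)
    · exact absurd rfl hne2
  · exfalso
    have hw1 : wit p q L n D j = 0 := wit_r6 _ _ _ _ _ hn hD (by omega)
    unfold Ev at hj
    rw [hw1] at hj
    rcases hj with h | ⟨h, _⟩ <;> exact absurd h (by decide)

lemma one_wit (hn : L + 2*D ≤ n) (hD : 1 ≤ D) {j : ℕ} (h : wit p q L n D j = 1) :
    (j < L ∧ p j = 1) ∨ (n ≤ j ∧ j < n + L ∧ q (j - n) = 1) := by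
  by_cases c1 : j < L
  · left; refine ⟨c1, ?_⟩; rw [wit_r1 p q L n D c1] at h; exact h
  by_cases c2 : j < L + D
  · rw [wit_r2 p q L n D (by omega) c2] at h; exact absurd h (by decide)
  by_cases c3 : j < n
  · rw [wit_r3 p q L n D (by omega) c3] at h; exact absurd h (by decide)
  by_cases c4 : j < n + L
  · right; exact ⟨by omega, c4, by rw [wit_r4 p q L n D hn hD (by omega) c4] at h; exact h⟩
  by_cases c5 : j < n + L + D
  · rw [wit_r5 p q L n D hn hD (by omega) c5] at h; exact absurd h (by decide)
  · rw [wit_r6 p q L n D hn hD (by omega)] at h; exact absurd h (by decide)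

lemma ruleP_wit (hp : RuleP p) (hq : RuleP q) (hn : L + 2*D ≤ n) (hD : 1 ≤ D)
    (Hpar : ∀ i j, i < L → j < L → p i = 1 → q j = 1 → (n + j) % 2 = i % 2) :
    RuleP (wit p q L n D) := by
  intro i j hi hj
  rcases one_wit p q L n D hn hD hi with ⟨hiL, hip⟩ | ⟨hin, hinL, hiq⟩ <;>
    rcases one_wit p q L n D hn hD hj with ⟨hjL, hjp⟩ | ⟨hjn, hjnL, hjq⟩
  · exact hp i j hip hjp
  · have := Hpar i (j - n) hiL (by omega) hip hjq; omega
  · have := Hpar j (i - n) hjL (by omega) hjp hiq; omega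
  · have := hq (i-n) (j-n) hiq hjq; omega

lemma cnt_wit_total (hL : 1 ≤ L) (hD : 1 ≤ D) (hn : L + 2*D ≤ n) (a b : ℕ) :
    cnt (wit p q L n D) a b ≤ 2*L + 2 := by
  unfold cnt
  have hsub : (Finset.Ico a b).filter (fun i => Ev (wit p q L n D) i) ⊆
      (Finset.Ico 0 L ∪ {L + D - 1}) ∪ (Finset.Ico n (n + L) ∪ {n + L + D - 1}) := by
    intro j hj
    simp only [Finset.mem_filter] at hj
    simp only [Finset.mem_union, Finset.mem_Ico, Finset.mem_singleton]
    rcases ev_wit p q L n D hL hD hn hj.2 with ⟨h1, _⟩ | h1 | ⟨h1, h2, _⟩ | h1 <;> omega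
  have h1 := Finset.card_le_card hsub
  have h2 := Finset.card_union_le (Finset.Ico 0 L ∪ ({L + D - 1} : Finset ℕ))
    (Finset.Ico n (n + L) ∪ ({n + L + D - 1} : Finset ℕ))
  have h3 := Finset.card_union_le (Finset.Ico 0 L) ({L + D - 1} : Finset ℕ)
  have h4 := Finset.card_union_le (Finset.Ico n (n + L)) ({n + L + D - 1} : Finset ℕ)
  simp only [Nat.card_Ico, Finset.card_singleton] at h3 h4
  omega

lemma ruleW_wit (hp : Good p) (hq : Good q) (hL : 1 ≤ L)
    (hn : L + 2 * Wd (2*L) ≤ n) : RuleW (wit p q L n (Wd (2*L))) := by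
  set D := Wd (2*L) with hDdef
  have hD : 1 ≤ D := Wd_pos _
  intro a k
  rcases Nat.lt_or_ge k (2*L) with hk | hk
  · have hWd : Wd k < D := Wd_strictMono hk
    by_cases h1 : ∃ j, a ≤ j ∧ j < a + Wd k ∧ Ev (wit p q L n D) j ∧ j < L
    · obtain ⟨j1, hj1a, hj1b, _, hj1L⟩ := h1
      apply cnt_le_rule hp.2 (t := 0)
      intro j hja hjb hje
      rcases ev_wit p q L n D hL hD hn hje with ⟨hjL, hev⟩ | hj | ⟨hjn, _, _⟩ | hj
      · exact ⟨Nat.zero_le _, by simpa using hev⟩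
      · omega
      · omega
      · omega
    by_cases h3 : ∃ j, a ≤ j ∧ j < a + Wd k ∧ Ev (wit p q L n D) j ∧ n ≤ j ∧ j < n + L
    · obtain ⟨j1, hj1a, hj1b, _, hj1n, hj1nL⟩ := h3
      apply cnt_le_rule hq.2 (t := n)
      intro j hja hjb hje
      rcases ev_wit p q L n D hL hD hn hje with ⟨hjL, _⟩ | hj | ⟨hjn, hjnL, hev⟩ | hj
      · omega
      · omega
      · exact ⟨by omega, hev⟩
      · omega
    by_cases h2 : a ≤ L + D - 1 ∧ L + D - 1 < a + Wd k
    · refine le_trans (cnt_le_singleton (e := L + D - 1) ?_) (by omega)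
      intro j hja hjb hje
      rcases ev_wit p q L n D hL hD hn hje with ⟨hjL, hev⟩ | hj | ⟨hjn, hjnL, hev⟩ | hj
      · exact absurd ⟨j, hja, hjb, hje, hjL⟩ h1
      · exact hj
      · exact absurd ⟨j, hja, hjb, hje, hjn, hjnL⟩ h3
      · omega
    · refine le_trans (cnt_le_singleton (e := n + L + D - 1) ?_) (by omega)
      intro j hja hjb hje
      rcases ev_wit p q L n D hL hD hn hje with ⟨hjL, hev⟩ | hj | ⟨hjn, hjnL, hev⟩ | hj
      · exact absurd ⟨j, hja, hjb, hje, hjL⟩ h1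
      · exact absurd (by omega : a ≤ L + D - 1 ∧ L + D - 1 < a + Wd k) h2
      · exact absurd ⟨j, hja, hjb, hje, hjn, hjnL⟩ h3
      · exact hj
  · have h5 := cnt_wit_total p q L n (Wd (2*L)) hL hD hn a (a + Wd k)
    rw [← hDdef] at h5
    omega

lemma good_wit (hp : Good p) (hq : Good q) (hL : 1 ≤ L)
    (hn : L + 2 * Wd (2*L) ≤ n)
    (Hpar : ∀ i j, i < L → j < L → p i = 1 → q j = 1 → (n + j) % 2 = i % 2) :
    Good (wit p q L n (Wd (2*L))) :=
  ⟨ruleP_wit p q L n (Wd (2*L)) hp.1 hq.1 hn (Wd_pos _) Hpar,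
   ruleW_wit p q L n hp hq hL hn⟩


/-! ### exemplar points -/

def czero : Seq := fun _ => 0
def ctwo : Seq := fun _ => 2
def q1 : Seq := fun i => if i = 0 then 1 else 0
def q01 : Seq := fun i => if i = 1 then 1 else 0

lemma good_czero : Good czero := by
  constructor
  · intro i j hi; simp [czero] at hi
  · intro a k
    refine le_trans (cnt_le_singleton (e := 0) ?_) (by omega)
    intro j _ _ hj
    rcases hj with h | ⟨h, _⟩ <;> simp [czero] at h

lemma good_ctwo : Good ctwo := by
  constructor
  · intro i j hi; simp [ctwo] at hi
  · intro a k
    refine le_trans (cnt_le_singleton (e := 0) ?_) (by omega)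
    intro j _ _ hj
    rcases hj with h | ⟨_, h⟩
    · simp [ctwo] at h
    · exact absurd rfl h

lemma good_q1 : Good q1 := by
  constructor
  · intro i j hi hj
    have h1 : i = 0 := by
      by_contra h; simp [q1, h] at hi
    have h2 : j = 0 := by
      by_contra h; simp [q1, h] at hj
    rw [h1, h2]
  · intro a k
    refine le_trans (cnt_le_singleton (e := 0) ?_) (by omega)
    intro j _ _ hj
    by_contra h
    unfold Ev q1 at hj
    simp [h] at hj

lemma good_q01 : Good q01 := by
  constructor
  · intro i j hi hj
    have h1 : i = 1 := by
      by_contra h; simp [q01, h] at hi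
    have h2 : j = 1 := by
      by_contra h; simp [q01, h] at hj
    rw [h1, h2]
  · intro a k
    refine le_trans (cnt_le_singleton (e := 1) ?_) (by omega)
    intro j _ _ hj
    by_contra h
    unfold Ev q01 at hj
    simp [h] at hj

def z0 : Y := ⟨czero, good_czero⟩
def z2 : Y := ⟨ctwo, good_ctwo⟩
def yq1 : Y := ⟨q1, good_q1⟩
def yq01 : Y := ⟨q01, good_q01⟩

lemma T_z0 (n : ℕ) : T^[n] z0 = z0 := by
  apply Subtype.ext; funext i; rw [iter_apply]; rfl

lemma T_z2 (n : ℕ) : T^[n] z2 = z2 := by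
  apply Subtype.ext; funext i; rw [iter_apply]; rfl

/-! ### the syndetic gluing lemma -/

lemma wit_gives {U V : Set Y} {p q : Y} {NU NV L n : ℕ}
    (hNU : ∀ y : Y, (∀ i < NU, y.1 i = p.1 i) → y ∈ U)
    (hNV : ∀ y : Y, (∀ i < NV, y.1 i = q.1 i) → y ∈ V)
    (hLU : NU ≤ L) (hLV : NV ≤ L) (hL : 1 ≤ L)
    (hn : L + 2 * Wd (2*L) ≤ n)
    (Hpar : ∀ i j, i < L → j < L → p.1 i = 1 → q.1 j = 1 → (n + j) % 2 = i % 2) :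
    ∃ y : Y, y ∈ U ∧ T^[n] y ∈ V := by
  refine ⟨⟨wit p.1 q.1 L n (Wd (2*L)), good_wit p.1 q.1 L n p.2 q.2 hL hn Hpar⟩, ?_, ?_⟩
  · apply hNU
    intro i hi
    exact wit_r1 _ _ _ _ _ (by omega)
  · apply hNV
    intro i hi
    refine (iter_apply n _ i).trans ?_
    show wit p.1 q.1 L n (Wd (2*L)) (i + n) = q.1 i
    rw [wit_r4 _ _ _ _ _ hn (Wd_pos _) (by omega) (by omega), Nat.add_sub_cancel]

lemma synd {U V : Set Y} (hU : Opene U) (hV : Opene V) :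
    ∃ C r, 1 ≤ C ∧ r ≤ 1 ∧ ∀ n, C ≤ n → n % 2 = r →
      ∃ y : Y, y ∈ U ∧ T^[n] y ∈ V := by
  obtain ⟨p, hp⟩ := hU.2
  obtain ⟨q, hq⟩ := hV.2
  obtain ⟨NU, hNU⟩ := exists_cyl hU.1 hp
  obtain ⟨NV, hNV⟩ := exists_cyl hV.1 hq
  have hNU' : ∀ y : Y, (∀ i < NU, y.1 i = p.1 i) → y ∈ U := hNU
  have hNV' : ∀ y : Y, (∀ i < NV, y.1 i = q.1 i) → y ∈ V := hNV
  set L := max NU NV + 1 with hLdef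
  have hL : 1 ≤ L := by omega
  by_cases hcase : (∃ i, i < L ∧ p.1 i = 1) ∧ (∃ j, j < L ∧ q.1 j = 1)
  · obtain ⟨⟨i0, hi0L, hi0⟩, ⟨j0, hj0L, hj0⟩⟩ := hcase
    refine ⟨L + 2 * Wd (2*L), (i0 + j0) % 2, by omega, by omega, ?_⟩
    intro n hn hr
    apply wit_gives hNU' hNV' (by omega) (by omega) hL hn
    intro i j _ _ hpi hqj
    have e1 := p.2.1 i i0 hpi hi0
    have e2 := q.2.1 j j0 hqj hj0
    omega
  · refine ⟨L + 2 * Wd (2*L), 0, by omega, by omega, ?_⟩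
    intro n hn _
    apply wit_gives hNU' hNV' (by omega) (by omega) hL hn
    intro i j hiL hjL hpi hqj
    exact absurd ⟨⟨i, hiL, hpi⟩, ⟨j, hjL, hqj⟩⟩ hcase

/-! ### eventless windows and constant runs -/

lemma arith_key (Λ : ℕ) (hΛ : 1 ≤ Λ) : (Λ + 4) * Λ ≤ Wd (Λ + 1) := by
  have h2 : Λ < 2^Λ := Nat.lt_two_pow_self
  unfold Wd
  calc (Λ+4)*Λ ≤ (2*(Λ+3))*Λ := Nat.mul_le_mul_right _ (by omega)
    _ ≤ (2*(Λ+3))*2^Λ := Nat.mul_le_mul_left _ h2.le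
    _ = (Λ+1+2)*2^(Λ+1) := by ring

lemma exists_eventless {x : Seq} (hx : RuleW x) (Λ m : ℕ) (hΛ : 1 ≤ Λ) :
    ∃ j, m ≤ j ∧ ∀ i, j ≤ i → i < j + Λ → ¬ Ev x i := by
  by_contra hcon
  push_neg at hcon
  have hf : ∀ t : ℕ, ∃ i, m + t*Λ ≤ i ∧ i < m + t*Λ + Λ ∧ Ev x i := by
    intro t
    obtain ⟨i, h1, h2, h3⟩ := hcon (m + t*Λ) (by omega)
    exact ⟨i, h1, h2, h3⟩
  choose f hf1 hf2 hf3 using hf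
  have hkey : (Λ + 4) * Λ ≤ Wd (Λ + 1) := arith_key Λ hΛ
  have hcard : Λ + 4 ≤ cnt x m (m + Wd (Λ+1)) := by
    unfold cnt
    have hmap : ∀ t, t ∈ Finset.range (Λ+4) →
        f t ∈ (Finset.Ico m (m + Wd (Λ+1))).filter (fun i => Ev x i) := by
      intro t ht
      simp only [Finset.mem_range] at ht
      simp only [Finset.mem_filter, Finset.mem_Ico]
      have h1 := hf1 t
      have h2 := hf2 t
      have hmul : (t+1) * Λ ≤ (Λ+4) * Λ := Nat.mul_le_mul_right _ (by omega)
      have hone : (t + 1) * Λ = t * Λ + Λ := by ring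
      exact ⟨⟨by omega, by omega⟩, hf3 t⟩
    have hinj : Set.InjOn f ↑(Finset.range (Λ+4)) := by
      intro t1 _ t2 _ heq
      by_contra hne
      have key : ∀ s1 s2 : ℕ, s1 < s2 → f s1 = f s2 → False := by
        intro s1 s2 hlt he
        have h1 := hf1 s1
        have h2 := hf2 s1
        have h3 := hf1 s2
        have hmul : (s1+1) * Λ ≤ s2 * Λ := Nat.mul_le_mul_right _ (by omega)
        have hone : (s1 + 1) * Λ = s1 * Λ + Λ := by ring
        omega
      rcases Nat.lt_trichotomy t1 t2 with h | h | h
      · exact key t1 t2 h heq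
      · exact hne h
      · exact key t2 t1 h heq.symm
    have := Finset.card_le_card_of_injOn f hmap hinj
    simpa using this
  have := hx m (Λ+1)
  omega

lemma run_of_eventless {x : Seq} {j h : ℕ}
    (hev : ∀ i, j ≤ i → i < j + (2*h+2) → ¬ Ev x i) :
    (∀ s, s ≤ h → x (j + s) = 0) ∨ (∃ j', j ≤ j' ∧ ∀ s, s ≤ h → x (j' + s) = 2) := by
  have hne1 : ∀ i, j ≤ i → i < j + (2*h+2) → x i ≠ 1 := by
    intro i h1 h2 hx1
    exact hev i h1 h2 (Or.inl hx1)
  have hprop : ∀ i, j ≤ i → i < j + (2*h+1) → x i = 2 → x (i+1) = 2 := by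
    intro i h1 h2 hx2
    by_contra hne
    exact hev i h1 (by omega) (Or.inr ⟨hx2, hne⟩)
  by_cases hx : x (j + h) = 2
  · right
    refine ⟨j + h, by omega, ?_⟩
    intro s hs
    induction s with
    | zero => simpa using hx
    | succ t ih =>
      have ht : x (j + h + t) = 2 := ih (by omega)
      have hstep := hprop (j + h + t) (by omega) (by omega) ht
      rw [show j + h + (t+1) = (j + h + t) + 1 by omega]
      exact hstep
  · left
    intro s hs
    have h2 : x (j + s) = 2 → False := by
      intro hx2
      have hchain : ∀ d, s + d ≤ h → x (j + s + d) = 2 := by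
        intro d
        induction d with
        | zero => intro _; simpa using hx2
        | succ t ih =>
          intro hle
          have ht := ih (by omega)
          have hstep := hprop (j + s + t) (by omega) (by omega) ht
          rw [show j + s + (t+1) = (j + s + t) + 1 by omega]
          exact hstep
      have hfin := hchain (h - s) (by omega)
      rw [show j + s + (h - s) = j + h by omega] at hfin
      exact hx hfin
    have hn1 := hne1 (j + s) (by omega) (by omega)
    rcases fin3 (x (j + s)) with h' | h' | h'
    · exact h'
    · exact absurd h' hn1
    · exact absurd h' h2

lemma exists_runs (x : Y) :
    ∃ c : Fin 3, (c = 0 ∨ c = 2) ∧ ∀ N m : ℕ, ∃ j, m ≤ j ∧ ∀ s < N, x.1 (j + s) = c := by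
  by_cases h0 : ∀ N m : ℕ, ∃ j, m ≤ j ∧ ∀ s < N, x.1 (j + s) = 0
  · exact ⟨0, Or.inl rfl, h0⟩
  · push_neg at h0
    obtain ⟨N0, m0, hN0⟩ := h0
    refine ⟨2, Or.inr rfl, ?_⟩
    intro N m
    set h := N + N0 with hh
    obtain ⟨j, hjm, hjev⟩ := exists_eventless x.2.2 (2*h+2) (max m m0) (by omega)
    rcases run_of_eventless hjev with hrun0 | ⟨j', hjj', hrun2⟩
    · exfalso
      obtain ⟨s, hs, hsne⟩ := hN0 j (by omega)
      exact hsne (hrun0 s (by omega))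
    · exact ⟨j', by omega, fun s hs => hrun2 s (by omega)⟩


/-! ### transitive compactness -/

theorem transCompact_T : TransCompact T := by
  intro x
  obtain ⟨c, hc, hruns⟩ := exists_runs x
  have hzgood : Good (fun _ => c) := by
    rcases hc with rfl | rfl
    · exact good_czero
    · exact good_ctwo
  refine ⟨⟨fun _ => c, hzgood⟩, ?_⟩
  intro G hG hzG U V hU hV
  obtain ⟨N, hN⟩ := exists_cyl hG hzG
  obtain ⟨C, r, hC1, hr1, hsynd⟩ := synd hU hV
  obtain ⟨j, hjC, hrun⟩ := hruns (N + 2) C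
  set n := if j % 2 = r then j else j + 1 with hndef
  have hnC : C ≤ n := by rw [hndef]; split <;> omega
  have hnr : n % 2 = r := by
    rw [hndef]; split
    · assumption
    · omega
  have hnj : j ≤ n ∧ n ≤ j + 1 := by rw [hndef]; split <;> omega
  refine ⟨n, ?_, ?_⟩
  · show T^[n] x ∈ G
    apply hN
    intro i hi
    rw [iter_apply]
    have hrr := hrun (i + n - j) (by omega)
    rw [show j + (i + n - j) = i + n by omega] at hrr
    exact hrr
  · obtain ⟨y, hyU, hyV⟩ := hsynd n hnC hnr
    exact ⟨y, hyU, hyV⟩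

/-! ### not totally transitive -/

def Ucyl : Set Y := {y : Y | ∀ i < 1, y.1 i = q1 i}
def Vcyl : Set Y := {y : Y | ∀ i < 2, y.1 i = q01 i}

lemma notTT : ¬ TotallyTransitive T := by
  intro h
  have hUo : Opene Ucyl := ⟨isOpen_cylY q1 1, ⟨yq1, fun i _ => rfl⟩⟩
  have hVo : Opene Vcyl := ⟨isOpen_cylY q01 2, ⟨yq01, fun i _ => rfl⟩⟩
  obtain ⟨n, y, hyU, hyV⟩ := h 2 (by norm_num) Ucyl Vcyl hUo hVo
  have hiter : T^[2*n] y = (T^[2])^[n] y := congrFun (Function.iterate_mul T 2 n) y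
  rw [Set.mem_preimage, ← hiter] at hyV
  have e1 : y.1 0 = 1 := by
    have := hyU 0 (by omega); simpa [q1] using this
  have e0 : y.1 (0 + 2*n) = 0 := by
    have := hyV 0 (by omega); rw [iter_apply] at this; simpa [q01] using this
  have e2 : y.1 (1 + 2*n) = 1 := by
    have := hyV 1 (by omega); rw [iter_apply] at this; simpa [q01] using this
  have := y.2.1 (1 + 2*n) 0 e2 e1
  omega

/-! ### not proximal -/

lemma z0_ne_z2 : z0 ≠ z2 := by
  intro h
  have := congrFun (congrArg Subtype.val h) 0
  simp [z0, z2, czero, ctwo] at this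

lemma notProx : ¬ ProximalSystem T := by
  intro h
  have hp := h z0 z2
  unfold ProximalPair at hp
  have hconst : (fun n : ℕ => dist (T^[n] z0) (T^[n] z2)) = fun _ => dist z0 z2 := by
    funext n; rw [T_z0, T_z2]
  rw [hconst, liminf_const] at hp
  exact z0_ne_z2 (dist_eq_zero.1 hp)

/-! ### perfectness -/

lemma perfect (x : Y) : (𝓝[≠] x).NeBot := by
  rw [← mem_closure_iff_nhdsWithin_neBot]
  rw [Metric.mem_closure_iff]
  intro ε hε
  obtain ⟨N, hN⟩ : ∃ N : ℕ, (1/2:ℝ)^N < ε := exists_pow_lt_of_lt_one hε (by norm_num)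
  set L := N + 3 with hLdef
  set D := Wd (2*L) with hDdef
  have hD : 1 ≤ D := Wd_pos _
  set n := L + 2*D with hndef
  have hpar : ∀ i j, i < L → j < L → x.1 i = 1 → czero j = 1 → True := fun _ _ _ _ _ _ => trivial
  have hgood1 : Good (wit x.1 czero L n D) := by
    rw [hDdef]
    exact good_wit x.1 czero L n x.2 good_czero (by omega) (by omega)
      (fun i j _ _ _ hq => by simp [czero] at hq)
  have hgood2 : Good (wit x.1 czero L (n+2) D) := by
    rw [hDdef]
    exact good_wit x.1 czero L (n+2) x.2 good_czero (by omega) (by omega)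
      (fun i j _ _ _ hq => by simp [czero] at hq)
  set y1 : Y := ⟨wit x.1 czero L n D, hgood1⟩ with hy1def
  set y2 : Y := ⟨wit x.1 czero L (n+2) D, hgood2⟩ with hy2def
  have e1 : y1.1 (n + L) = 2 := wit_r5 _ _ _ _ _ (by omega) hD (le_refl _) (by omega)
  have e2 : y2.1 (n + L) = czero ((n + L) - (n + 2)) :=
    wit_r4 _ _ _ _ _ (by omega) hD (by omega) (by omega)
  have hdiff : y1 ≠ y2 := by
    intro hcontra
    have := congrFun (congrArg Subtype.val hcontra) (n + L)
    rw [e1, e2] at this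
    simp [czero] at this
  have hy1x : ∀ i < L, y1.1 i = x.1 i := fun i hi => wit_r1 _ _ _ _ _ hi
  have hy2x : ∀ i < L, y2.1 i = x.1 i := fun i hi => wit_r1 _ _ _ _ _ hi
  have hpow : ((1:ℝ)/2)^L ≤ (1/2)^N := by
    apply pow_le_pow_of_le_one (by norm_num) (by norm_num)
    omega
  by_cases hx1 : y1 = x
  · refine ⟨y2, ?_, ?_⟩
    · intro hy2
      rw [Set.mem_singleton_iff] at hy2
      exact hdiff (hx1.trans hy2.symm)
    · rw [dist_comm]
      exact lt_of_le_of_lt ((dist_le_of_cyl hy2x).trans hpow) hN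
  · refine ⟨y1, ?_, ?_⟩
    · intro hy1
      rw [Set.mem_singleton_iff] at hy1
      exact hx1 hy1
    · rw [dist_comm]
      exact lt_of_le_of_lt ((dist_le_of_cyl hy1x).trans hpow) hN

instance : Nontrivial Y := ⟨⟨z0, z2, z0_ne_z2⟩⟩

end St3

/-- There exists a transitive compact, non totally transitive system;
moreover, there exists such a system which is additionally non-proximal. -/
theorem stmt3 :
    (∃ (X : Type) (_ : MetricSpace X) (_ : CompactSpace X) (_ : Nontrivial X) (T : X → X),
      (∀ x : X, (𝓝[≠] x).NeBot) ∧ Continuous T ∧ Function.Surjective T ∧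
      TransCompact T ∧ ¬ TotallyTransitive T) ∧
    (∃ (X : Type) (_ : MetricSpace X) (_ : CompactSpace X) (_ : Nontrivial X) (T : X → X),
      (∀ x : X, (𝓝[≠] x).NeBot) ∧ Continuous T ∧ Function.Surjective T ∧
      TransCompact T ∧ ¬ TotallyTransitive T ∧ ¬ ProximalSystem T) := by
  constructor
  · exact ⟨St3.Y, inferInstance, inferInstance, inferInstance, St3.T, St3.perfect,
      St3.continuous_T, St3.T_surjective, St3.transCompact_T, St3.notTT⟩
  · exact ⟨St3.Y, inferInstance, inferInstance, inferInstance, St3.T, St3.perfect,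
      St3.continuous_T, St3.T_surjective, St3.transCompact_T, St3.notTT, St3.notProx⟩
end

section
/- There exist a weakly mixing dynamical system (X,T) and a point x ∈ X such that ω_{N_T}(x) is a proper subset of ω_T(x). -/
open Filter Topology Set Metric

namespace Stmt4Aux
/-- powers of 4 -/
def IsPow4 (n : ℕ) : Prop := ∃ k, n = 4^k

/-- allowed gaps -/
def Pset (n : ℕ) : Prop := 0 < n ∧ ¬ IsPow4 n

lemma not_isPow4_between {k m : ℕ} (h1 : 4^k < m) (h2 : m < 4^(k+1)) : ¬ IsPow4 m := by
  rintro ⟨j, rfl⟩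
  rcases le_or_gt j k with h | h
  · exact absurd (Nat.pow_le_pow_right (by norm_num : 1 ≤ 4) h) (by omega)
  · exact absurd (Nat.pow_le_pow_right (by norm_num : 1 ≤ 4) h) (by omega)

lemma pset_between {k m : ℕ} (h1 : 4^k < m) (h2 : m < 4^(k+1)) : Pset m :=
  ⟨lt_of_le_of_lt (Nat.zero_le _) h1, not_isPow4_between h1 h2⟩

lemma pset_diff_pow4 {a b : ℕ} (h : 4^a < 4^b) : Pset (4^b - 4^a) := by
  have hab : a < b := by
    by_contra hc
    exact absurd (Nat.pow_le_pow_right (by norm_num : 1 ≤ 4) (not_lt.1 hc)) (by omega)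
  have hb : b = (b-1) + 1 := by omega
  have h1 : 4^a ≤ 4^(b-1) := Nat.pow_le_pow_right (by norm_num) (by omega)
  have h2 : 4^b = 4 * 4^(b-1) := by
    conv_lhs => rw [hb]
    rw [pow_succ]; ring
  have h3 : (0:ℕ) < 4^a := by positivity
  have h4 : 4 ^ ((b-1) + 1) = 4 * 4 ^ (b-1) := by rw [pow_succ]; ring
  refine pset_between (k := b - 1) (by omega) (by omega)

lemma lt_pow4 (n : ℕ) : n < 4^n := Nat.lt_pow_self (by norm_num : 1 < 4)

/-- key interval lemma: for p,q < N, `4^N + N + q - p` is in Pset -/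
lemma pset_glue {N p q : ℕ} (hp : p < N) (hq : q < N) : Pset (4^N + N + q - p) := by
  have h4 : N < 4^N := lt_pow4 N
  refine pset_between (k := N) (by omega) ?_
  have : 4^(N+1) = 4 * 4^N := by ring
  omega

def Good (w : ℕ → Bool) : Prop :=
  ∀ i j, i < j → w i = true → w j = true → Pset (j - i)

/-- the glue of two words -/
def glue (a b : ℕ → Bool) (N n : ℕ) : ℕ → Bool := fun m =>
  if m < N then a m else if n ≤ m ∧ m < n + N then b (m - n) else false

lemma good_glue {a b : ℕ → Bool} (ha : Good a) (hb : Good b) {N n : ℕ}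
    (hN : N ≤ n) (hP : ∀ p q, p < N → q < N → Pset (n + q - p)) :
    Good (glue a b N n) := by
  intro i j hij hi hj
  unfold glue at hi hj
  split_ifs at hi hj with h1 h2 h2 h3 h3 h4
  · exact ha i j hij hi hj
  · have := hP i (j - n) h1 (by omega)
    have : Pset (n + (j - n) - i) := this
    convert this using 1; omega
  · omega
  · convert hb (i - n) (j - n) (by omega) hi hj using 1; omega

lemma glue_left {a b : ℕ → Bool} {N n m : ℕ} (h : m < N) : glue a b N n m = a m := by
  simp [glue, h]

lemma glue_mid {a b : ℕ → Bool} {N n q : ℕ} (hN : N ≤ n) (h : q < N) :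
    glue a b N n (n + q) = b q := by
  have h1 : ¬ (n + q < N) := by omega
  simp [glue, h1, h]

lemma glue_out {a b : ℕ → Bool} {N n m : ℕ} (h1 : ¬ m < N) (h2 : ¬ (n ≤ m ∧ m < n + N)) :
    glue a b N n m = false := by
  simp [glue, h1, h2]


noncomputable def piMS : MetricSpace (ℕ → Bool) := PiNat.metricSpace
attribute [local instance] piMS

/-- The spacing-shift space. -/
def Xsp : Type := {w : ℕ → Bool // Good w}

noncomputable instance : MetricSpace Xsp := Subtype.metricSpace

lemma dist_le_of_agree {a b : Xsp} {N : ℕ} (h : ∀ i < N, a.1 i = b.1 i) :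
    dist a b ≤ (1/2)^N := by
  have : dist a.1 b.1 ≤ (1/2)^N := PiNat.mem_cylinder_iff_dist_le.1 h
  exact this

lemma agree_of_dist_lt {a b : Xsp} {N i : ℕ} (h : dist a b < (1/2)^N) (hi : i ≤ N) :
    a.1 i = b.1 i :=
  PiNat.apply_eq_of_dist_lt h hi

/-- open sets contain cylinders -/
lemma exists_cyl_subset {G : Set Xsp} (hG : IsOpen G) {z : Xsp} (hz : z ∈ G) :
    ∃ N, ∀ y : Xsp, (∀ i < N, y.1 i = z.1 i) → y ∈ G := by
  obtain ⟨ε, hε, hball⟩ := Metric.isOpen_iff.1 hG z hz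
  obtain ⟨N, hN⟩ : ∃ N : ℕ, (1/2 : ℝ)^N < ε :=
    exists_pow_lt_of_lt_one hε (by norm_num)
  exact ⟨N, fun y hy => hball (lt_of_le_of_lt (dist_le_of_agree hy) hN)⟩

/-- the coordinate sets are open -/
lemma isOpen_coord (i : ℕ) (v : Bool) : IsOpen {w : Xsp | w.1 i = v} := by
  refine Metric.isOpen_iff.2 fun z hz => ⟨(1/2)^i, by positivity, fun y hy => ?_⟩
  have h2 := agree_of_dist_lt (show dist y z < (1/2)^i from hy) le_rfl
  show y.1 i = v
  rw [h2]; exact hz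

/-- Compactness -/
lemma isClosed_good : IsClosed {w : ℕ → Bool | Good w} := by
  have : {w : ℕ → Bool | Good w} =
      ⋂ (i : ℕ) (j : ℕ) (_ : i < j) (_ : ¬ Pset (j - i)),
        {w : ℕ → Bool | w i = true → w j = true → False} := by
    ext w
    simp only [Set.mem_setOf_eq, Set.mem_iInter]
    constructor
    · intro h i j hij hP hwi hwj; exact hP (h i j hij hwi hwj)
    · intro h i j hij hwi hwj
      by_contra hP
      exact h i j hij hP hwi hwj
  rw [this]
  refine isClosed_iInter fun i => isClosed_iInter fun j => isClosed_iInter fun _ =>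
    isClosed_iInter fun _ => ?_
  have : {w : ℕ → Bool | w i = true → w j = true → False} =
      ({w : ℕ → Bool | w i = true} ∩ {w : ℕ → Bool | w j = true})ᶜ := by
    ext w; simp only [Set.mem_setOf_eq, Set.mem_compl_iff, Set.mem_inter_iff]; tauto
  rw [this]
  refine (IsOpen.inter ?_ ?_).isClosed_compl
  · show IsOpen ((fun w : ℕ → Bool => w i) ⁻¹' {true})
    exact (isOpen_discrete _).preimage (continuous_apply i)
  · show IsOpen ((fun w : ℕ → Bool => w j) ⁻¹' {true})
    exact (isOpen_discrete _).preimage (continuous_apply j)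

instance : CompactSpace Xsp :=
  isCompact_iff_compactSpace.1 (isClosed_good.isCompact)

/-- the shift map -/
def Tsh : Xsp → Xsp := fun w =>
  ⟨fun n => w.1 (n+1), fun i j hij hi hj => by
    have := w.2 (i+1) (j+1) (by omega) hi hj
    simpa [Nat.succ_sub_succ] using this⟩

lemma Tsh_iter (z : Xsp) (n m : ℕ) : ((Tsh^[n]) z).1 m = z.1 (m + n) := by
  induction n generalizing m with
  | zero => rfl
  | succ k ih =>
    rw [Function.iterate_succ', Function.comp_apply]
    show ((Tsh^[k]) z).1 (m+1) = z.1 (m + (k+1))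
    rw [ih]; ring_nf

lemma continuous_Tsh : Continuous Tsh := by
  refine Continuous.subtype_mk ?_ _
  exact continuous_pi fun n => (continuous_apply (n+1)).comp continuous_subtype_val

lemma surjective_Tsh : Function.Surjective Tsh := by
  intro w
  refine ⟨⟨fun m => if m = 0 then false else w.1 (m-1), ?_⟩, ?_⟩
  · intro i j hij hi hj
    simp only at hi hj
    split_ifs at hi hj with h1 h2
    have := w.2 (i-1) (j-1) (by omega) hi hj
    convert this using 1; omega
  · apply Subtype.ext
    funext m
    show (if m + 1 = 0 then false else w.1 (m+1-1)) = w.1 m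
    simp


noncomputable instance instMS : MetricSpace Xsp := inferInstance
instance instCS : CompactSpace Xsp := inferInstance

/-! ### special points -/

def xfun : ℕ → Bool := fun n => decide (n = 4 ^ Nat.log 4 n)

lemma xfun_iff {n : ℕ} : xfun n = true ↔ IsPow4 n := by
  unfold xfun
  rw [decide_eq_true_iff]
  constructor
  · intro h; exact ⟨_, h⟩
  · rintro ⟨k, rfl⟩; rw [Nat.log_pow (by norm_num)]

lemma xfun_false {n : ℕ} (h : ¬ IsPow4 n) : xfun n = false := by
  rw [← Bool.not_eq_true, xfun_iff]; exact h

def xpt : Xsp := ⟨xfun, by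
  intro i j hij hi hj
  obtain ⟨a, rfl⟩ := xfun_iff.1 hi
  obtain ⟨b, rfl⟩ := xfun_iff.1 hj
  exact pset_diff_pow4 hij⟩

def z0 : Xsp := ⟨fun n => decide (n = 0), by
  intro i j hij hi hj
  simp only [decide_eq_true_iff] at hi hj
  omega⟩

def zeroX : Xsp := ⟨fun _ => false, by intro i j _ hi _; simp at hi⟩

instance instNontriv : Nontrivial Xsp := by
  refine ⟨z0, zeroX, fun h => ?_⟩
  have := congrArg (fun w : Xsp => w.1 0) h
  simp [z0, zeroX] at this

/-! ### perfectness -/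

lemma good_trunc (z : Xsp) (N : ℕ) : Good (fun m => if m < N then z.1 m else false) := by
  intro i j hij hi hj
  simp only at hi hj
  split_ifs at hi hj with h1 h2
  exact z.2 i j hij hi hj

lemma perfect_Xsp : ∀ z : Xsp, (𝓝[≠] z).NeBot := by
  intro z
  rw [← mem_closure_iff_nhdsWithin_neBot]
  rw [Metric.mem_closure_iff]
  intro ε hε
  obtain ⟨N', hN'⟩ : ∃ N : ℕ, (1/2 : ℝ)^N < ε := exists_pow_lt_of_lt_one hε (by norm_num)
  set N := N' + 1 with hNdef
  have hNε : (1/2 : ℝ)^N < ε :=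
    lt_of_le_of_lt (pow_le_pow_of_le_one (by norm_num) (by norm_num) (by omega)) hN'
  by_cases hcase : ∃ j, N ≤ j ∧ z.1 j = true
  · obtain ⟨j, hjN, hjt⟩ := hcase
    refine ⟨⟨_, good_trunc z N⟩, ?_, ?_⟩
    · show ¬ (_ = z)
      intro h
      have := congrArg (fun w : Xsp => w.1 j) h.symm
      simp only at this
      rw [if_neg (by omega)] at this
      rw [hjt] at this
      exact Bool.false_ne_true this.symm
    · refine lt_of_le_of_lt ?_ hNε
      refine (dist_comm _ _).trans_le ?_
      exact dist_le_of_agree fun i hi => by simp [if_pos hi]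
  · push_neg at hcase
    set n := 4^N + N with hn
    have hzn : z.1 n = false := by
      have h4 : N < 4^N := lt_pow4 N
      have := hcase n (by omega)
      exact Bool.not_eq_true _ ▸ (by simpa using this)
    have hgood : Good (glue z.1 z0.1 N n) := by
      refine good_glue z.2 z0.2 (by have := lt_pow4 N; omega) fun p q hp hq => ?_
      exact pset_glue hp hq
    refine ⟨⟨_, hgood⟩, ?_, ?_⟩
    · show ¬ (_ = z)
      intro h
      have := congrArg (fun w : Xsp => w.1 n) h
      simp only at this
      have hmid : glue z.1 z0.1 N n n = true := by
        have := glue_mid (a := z.1) (b := z0.1) (N := N) (n := n)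
          (by have := lt_pow4 N; omega) (by omega : (0:ℕ) < N)
        exact this.trans rfl
      rw [hmid, hzn] at this
      simp at this
    · refine lt_of_le_of_lt ?_ hNε
      refine (dist_comm _ _).trans_le ?_
      exact dist_le_of_agree fun i hi => glue_left hi


/-! ### weak mixing -/

lemma prod_iter (n : ℕ) (p : Xsp × Xsp) :
    (fun p : Xsp × Xsp => (Tsh p.1, Tsh p.2))^[n] p = (Tsh^[n] p.1, Tsh^[n] p.2) := by
  induction n generalizing p with
  | zero => rfl
  | succ k ih =>
    rw [Function.iterate_succ, Function.comp_apply, ih]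
    rw [show (Tsh^[k+1] p.1 : Xsp) = Tsh^[k] (Tsh p.1) from by
          rw [Function.iterate_succ, Function.comp_apply],
        show (Tsh^[k+1] p.2 : Xsp) = Tsh^[k] (Tsh p.2) from by
          rw [Function.iterate_succ, Function.comp_apply]]

/-- agreement on N coordinates in each factor puts you in an ε-ball in the product -/
lemma weakly_mixing_Tsh : WeaklyMixing Tsh := by
  intro A B hA hB
  obtain ⟨⟨a1, a2⟩, haA⟩ := hA.2
  obtain ⟨⟨b1, b2⟩, hbB⟩ := hB.2
  obtain ⟨εA, hεA, hballA⟩ := Metric.isOpen_iff.1 hA.1 _ haA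
  obtain ⟨εB, hεB, hballB⟩ := Metric.isOpen_iff.1 hB.1 _ hbB
  obtain ⟨NA, hNA⟩ : ∃ N : ℕ, (1/2 : ℝ)^N < εA := exists_pow_lt_of_lt_one hεA (by norm_num)
  obtain ⟨NB, hNB⟩ : ∃ N : ℕ, (1/2 : ℝ)^N < εB := exists_pow_lt_of_lt_one hεB (by norm_num)
  set N := max NA NB with hNdef
  have hpowA : (1/2 : ℝ)^N < εA :=
    lt_of_le_of_lt (pow_le_pow_of_le_one (by norm_num) (by norm_num) (le_max_left _ _)) hNA
  have hpowB : (1/2 : ℝ)^N < εB :=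
    lt_of_le_of_lt (pow_le_pow_of_le_one (by norm_num) (by norm_num) (le_max_right _ _)) hNB
  set n := 4^N + N with hn
  have hNn : N ≤ n := by have := lt_pow4 N; omega
  have hP : ∀ p q, p < N → q < N → Pset (n + q - p) := fun p q hp hq => pset_glue hp hq
  set c1 : Xsp := ⟨glue a1.1 b1.1 N n, good_glue a1.2 b1.2 hNn hP⟩ with hc1
  set c2 : Xsp := ⟨glue a2.1 b2.1 N n, good_glue a2.2 b2.2 hNn hP⟩ with hc2
  refine ⟨n, (c1, c2), ?_, ?_⟩
  · apply hballA
    rw [Metric.mem_ball, Prod.dist_eq]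
    refine max_lt (lt_of_le_of_lt ?_ hpowA) (lt_of_le_of_lt ?_ hpowA) <;>
      exact dist_le_of_agree fun i hi => glue_left hi
  · show (fun p : Xsp × Xsp => (Tsh p.1, Tsh p.2))^[n] (c1, c2) ∈ B
    rw [prod_iter]
    apply hballB
    rw [Metric.mem_ball, Prod.dist_eq]
    refine max_lt (lt_of_le_of_lt ?_ hpowB) (lt_of_le_of_lt ?_ hpowB) <;>
      · refine dist_le_of_agree fun i hi => ?_
        rw [Tsh_iter]
        show glue _ _ N n (i + n) = _
        rw [add_comm i n, glue_mid hNn hi]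

/-! ### omega sets -/

lemma infinite_of_unbounded {S : Set ℕ} (h : ∀ m, ∃ n ∈ S, m ≤ n) : S.Infinite := by
  intro hf
  obtain ⟨b, hb⟩ := hf.bddAbove
  obtain ⟨n, hn, hmn⟩ := h (b+1)
  exact absurd (hb hn) (by omega)

def Vset : Set Xsp := {w | w.1 0 = true}

lemma opene_Vset : Opene Vset := ⟨isOpen_coord 0 true, ⟨z0, rfl⟩⟩

lemma omegaNT_subset_omegaT (x : Xsp) : omegaNT Tsh x ⊆ omegaT Tsh x := by
  intro z hz G hG hzG
  refine infinite_of_unbounded fun m => ?_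
  have hUopen : IsOpen {w : Xsp | ∀ i < m, w.1 i = false} := by
    refine Metric.isOpen_iff.2 fun w hw => ⟨(1/2)^m, by positivity, fun y hy => ?_⟩
    intro i hi
    have := agree_of_dist_lt (show dist y w < (1/2)^m from hy) (le_of_lt hi)
    rw [this]; exact hw i hi
  have hUne : ({w : Xsp | ∀ i < m, w.1 i = false}).Nonempty := ⟨zeroX, fun i _ => rfl⟩
  obtain ⟨n, hn1, hn2⟩ := hz G hG hzG _ Vset ⟨hUopen, hUne⟩ opene_Vset
  obtain ⟨w, hwU, hwV⟩ := hn2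
  refine ⟨n, hn1, ?_⟩
  by_contra hc
  have h0 : (Tsh^[n] w).1 0 = true := hwV
  rw [Tsh_iter] at h0
  simp only [zero_add] at h0
  have := hwU n (by omega)
  rw [this] at h0
  exact Bool.false_ne_true h0

lemma z0_mem_omegaT : z0 ∈ omegaT Tsh xpt := by
  intro G hG hzG
  obtain ⟨N, hN⟩ := exists_cyl_subset hG hzG
  refine infinite_of_unbounded fun m => ?_
  set i := m + N + 1 with hi
  have h4 : i < 4^i := lt_pow4 i
  refine ⟨4^i, ?_, by omega⟩
  show Tsh^[4^i] xpt ∈ G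
  refine hN _ fun q hq => ?_
  rw [Tsh_iter]
  show xfun (q + 4^i) = z0.1 q
  rcases Nat.eq_zero_or_pos q with rfl | hq0
  · simp only [zero_add]
    rw [xfun_iff.2 ⟨i, rfl⟩]
    simp [z0]
  · have : z0.1 q = false := by simp [z0]; omega
    rw [this]
    refine xfun_false (not_isPow4_between (k := i) (by omega) ?_)
    have : 4^(i+1) = 4 * 4^i := by rw [pow_succ]; ring
    omega

lemma z0_not_mem_omegaNT : z0 ∉ omegaNT Tsh xpt := by
  intro h
  obtain ⟨n, hn1, hn2⟩ := h Vset (isOpen_coord 0 true) rfl Vset Vset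
    opene_Vset opene_Vset
  have hx : (Tsh^[n] xpt).1 0 = true := hn1
  rw [Tsh_iter] at hx
  simp only [zero_add] at hx
  have hpow : IsPow4 n := xfun_iff.1 hx
  have hn0 : 0 < n := by
    rcases Nat.eq_zero_or_pos n with rfl | h
    · exact absurd hx (by
        show xfun 0 = true → False
        simp [xfun])
    · exact h
  obtain ⟨w, hwU, hwV⟩ := hn2
  have h0 : w.1 0 = true := hwU
  have hnw : w.1 n = true := by
    have : (Tsh^[n] w).1 0 = true := hwV
    rw [Tsh_iter] at this
    simpa using this
  have := w.2 0 n hn0 h0 hnw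
  rw [Nat.sub_zero] at this
  exact this.2 hpow

end Stmt4Aux

/-- There exist a weakly mixing system `(X,T)` and a point `x ∈ X` such that
`ω_{N_T}(x)` is a proper subset of `ω_T(x)`. -/
theorem stmt4 :
    ∃ (X : Type) (_ : MetricSpace X) (_ : CompactSpace X) (_ : Nontrivial X)
      (T : X → X) (x : X),
      (∀ z : X, (𝓝[≠] z).NeBot) ∧ Continuous T ∧ Function.Surjective T ∧
      WeaklyMixing T ∧ omegaNT T x ⊂ omegaT T x := by
  refine ⟨Stmt4Aux.Xsp, Stmt4Aux.instMS, Stmt4Aux.instCS, Stmt4Aux.instNontriv,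
    Stmt4Aux.Tsh, Stmt4Aux.xpt, Stmt4Aux.perfect_Xsp, Stmt4Aux.continuous_Tsh,
    Stmt4Aux.surjective_Tsh, Stmt4Aux.weakly_mixing_Tsh, ?_⟩
  exact (Set.ssubset_iff_of_subset (Stmt4Aux.omegaNT_subset_omegaT _)).2
    ⟨Stmt4Aux.z0, Stmt4Aux.z0_mem_omegaT, Stmt4Aux.z0_not_mem_omegaNT⟩
end

section
/- Let (X,T) be an M-system such that ω_{N_T}(x) ≠ ∅ for every minimal point x ∈ X. Then (X,T) is weakly mixing. In particular, every transitive compact M-system is weakly mixing. -/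
open Filter Topology Set Metric

section Aux

set_option linter.unusedSectionVars false

variable {X : Type*} [MetricSpace X] [CompactSpace X] {T : X → X}

private lemma iter_mem_of_inv {M : Set X} (hM : T '' M = M) {z : X} (hz : z ∈ M) :
    ∀ k : ℕ, T^[k] z ∈ M := by
  intro k
  induction k with
  | zero => simpa
  | succ n ih =>
      rw [Function.iterate_succ_apply']
      exact hM ▸ Set.mem_image_of_mem T ih

/-- In a minimal subset, every point's forward orbit is dense in the subset. -/
private lemma orbit_dense_in_minimal (hTc : Continuous T) {M : Set X}
    (hMin : IsMinimalSubset T M) {z x : X} (hz : z ∈ M) (hx : x ∈ M) :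
    x ∈ closure (Set.range fun k : ℕ => T^[k] z) := by
  obtain ⟨hMne, hMcl, hMinv, hMmin⟩ := hMin
  set K : ℕ → Set X := fun n => closure (Set.range fun k : ℕ => T^[k + n] z) with hK
  have hKcl : ∀ n, IsClosed (K n) := fun n => isClosed_closure
  have hKcpt : ∀ n, IsCompact (K n) := fun n => (hKcl n).isCompact
  have hKne : ∀ n, (K n).Nonempty := fun n => ⟨T^[0 + n] z, subset_closure ⟨0, rfl⟩⟩
  have hKanti : Antitone K := by
    intro n m hnm
    obtain ⟨d, rfl⟩ := Nat.exists_eq_add_of_le hnm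
    apply closure_mono
    rintro _ ⟨k, rfl⟩
    refine ⟨k + d, ?_⟩
    show T^[k + d + n] z = T^[k + (n + d)] z
    congr 1
    omega
  have himg : ∀ n, T '' K n = K (n + 1) := by
    intro n
    have hfun : (T ∘ fun k : ℕ => T^[k + n] z) = fun k : ℕ => T^[k + (n + 1)] z := by
      funext k
      show T (T^[k + n] z) = T^[k + (n + 1)] z
      rw [← Function.iterate_succ_apply' T (k + n) z]
      congr 1
    have hr : T '' (Set.range fun k : ℕ => T^[k + n] z)
        = Set.range fun k : ℕ => T^[k + (n + 1)] z := by
      rw [← Set.range_comp, hfun]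
    calc T '' K n = closure (T '' Set.range fun k : ℕ => T^[k + n] z) :=
          (hTc.isClosedMap.closure_image_eq_of_continuous hTc _).symm
      _ = K (n + 1) := by rw [hr]
  have hKsubM : ∀ n, K n ⊆ M := by
    intro n
    apply closure_minimal _ hMcl
    rintro _ ⟨k, rfl⟩
    exact iter_mem_of_inv hMinv hz _
  set ω : Set X := ⋂ n, K n with hω
  have hωne : ω.Nonempty :=
    IsCompact.nonempty_iInter_of_directed_nonempty_isCompact_isClosed K
      hKanti.directed_ge hKne hKcpt hKcl
  have hωsub : ω ⊆ M := (Set.iInter_subset K 0).trans (hKsubM 0)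
  have hωcl : IsClosed ω := isClosed_iInter hKcl
  have hωinv : T '' ω = ω := by
    apply subset_antisymm
    · rintro _ ⟨w, hw, rfl⟩
      apply Set.mem_iInter.2
      intro n
      have : T w ∈ K (n + 1) := (himg n) ▸ Set.mem_image_of_mem T (Set.mem_iInter.1 hw n)
      exact hKanti (Nat.le_succ n) this
    · intro y hy
      set C : ℕ → Set X := fun n => K n ∩ T ⁻¹' {y} with hC
      have hCcl : ∀ n, IsClosed (C n) :=
        fun n => (hKcl n).inter (isClosed_singleton.preimage hTc)
      have hCne : ∀ n, (C n).Nonempty := by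
        intro n
        have : y ∈ K (n + 1) := Set.mem_iInter.1 hy (n + 1)
        rw [← himg n] at this
        obtain ⟨w, hw, hwy⟩ := this
        exact ⟨w, hw, hwy⟩
      have hCanti : Antitone C := fun n m hnm =>
        Set.inter_subset_inter_left _ (hKanti hnm)
      obtain ⟨w, hw⟩ :=
        IsCompact.nonempty_iInter_of_directed_nonempty_isCompact_isClosed C
          hCanti.directed_ge hCne (fun n => (hCcl n).isCompact) hCcl
      have hw1 : w ∈ ω := Set.mem_iInter.2 fun n => (Set.mem_iInter.1 hw n).1
      have hw2 : T w = y := (Set.mem_iInter.1 hw 0).2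
      exact ⟨w, hw1, hw2⟩
  have : ω = M := hMmin ω hωsub hωne hωcl hωinv
  have hxω : x ∈ ω := this ▸ hx
  have := Set.mem_iInter.1 hxω 0
  simpa [hK] using this

private lemma opene_preimage (hTc : Continuous T) (hTs : Function.Surjective T)
    {V : Set X} (hV : Opene V) (k : ℕ) : Opene (T^[k] ⁻¹' V) := by
  refine ⟨hV.1.preimage (hTc.iterate k), ?_⟩
  obtain ⟨v, hv⟩ := hV.2
  obtain ⟨w, hw⟩ := (hTs.iterate k) v
  exact ⟨w, by simp [Set.mem_preimage, hw, hv]⟩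

/-- The key property: N(U,U) ∩ N(U,V) ≠ ∅. -/
private lemma lemH [Nontrivial X] (hTc : Continuous T) (hTs : Function.Surjective T)
    (hdense : Dense {x : X | IsMinimalPoint T x})
    (homega : ∀ x : X, IsMinimalPoint T x → (omegaNT T x).Nonempty)
    {U V : Set X} (hU : Opene U) (hV : Opene V) :
    ∃ n : ℕ, (U ∩ T^[n] ⁻¹' U).Nonempty ∧ (U ∩ T^[n] ⁻¹' V).Nonempty := by
  obtain ⟨x, hxmin, hxU⟩ := hdense.exists_mem_open hU.1 hU.2
  obtain ⟨z, hzω⟩ := homega x hxmin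
  obtain ⟨M, hMmin, hxM⟩ := hxmin
  -- z is in the closure of the orbit of x
  have hXne : (Set.univ : Set X).Nonempty := Set.univ_nonempty
  have hzcl : z ∈ closure (Set.range fun n : ℕ => T^[n] x) := by
    rw [_root_.mem_closure_iff]
    intro G hG hzG
    obtain ⟨n, hn1, _⟩ := hzω G hG hzG Set.univ Set.univ ⟨isOpen_univ, hXne⟩
      ⟨isOpen_univ, hXne⟩
    exact ⟨T^[n] x, hn1, ⟨n, rfl⟩⟩
  have hzM : z ∈ M := by
    have : closure (Set.range fun n : ℕ => T^[n] x) ⊆ M :=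
      closure_minimal (by rintro _ ⟨n, rfl⟩; exact iter_mem_of_inv hMmin.2.2.1 hxM n)
        hMmin.2.1
    exact this hzcl
  -- x is in the closure of the orbit of z; find m with T^[m] z ∈ U
  have hxcl : x ∈ closure (Set.range fun k : ℕ => T^[k] z) :=
    orbit_dense_in_minimal hTc hMmin hzM hxM
  obtain ⟨_, hmU, ⟨m, rfl⟩⟩ := (_root_.mem_closure_iff.1 hxcl) U hU.1 hxU
  -- apply omegaNT with G := T^[m] ⁻¹' U
  obtain ⟨n, hn1, hn2⟩ := hzω (T^[m] ⁻¹' U) (hU.1.preimage (hTc.iterate m)) hmU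
    U (T^[m] ⁻¹' V) hU (opene_preimage hTc hTs hV m)
  obtain ⟨u, huU, huV⟩ := hn2
  refine ⟨m + n, ⟨x, hxU, ?_⟩, ⟨u, huU, ?_⟩⟩
  · have : T^[m] (T^[n] x) ∈ U := hn1
    simpa [Set.mem_preimage, ← Function.iterate_add_apply] using this
  · have : T^[m] (T^[n] u) ∈ V := huV
    simpa [Set.mem_preimage, ← Function.iterate_add_apply] using this

/-- The 3-set condition. -/
private lemma lem3 [Nontrivial X] (hTc : Continuous T) (hTs : Function.Surjective T)
    (hM : MSystem T)
    (homega : ∀ x : X, IsMinimalPoint T x → (omegaNT T x).Nonempty)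
    {U V₁ V₂ : Set X} (hU : Opene U) (hV₁ : Opene V₁) (hV₂ : Opene V₂) :
    ∃ n : ℕ, (U ∩ T^[n] ⁻¹' V₁).Nonempty ∧ (U ∩ T^[n] ⁻¹' V₂).Nonempty := by
  obtain ⟨k, hk⟩ := hM.1 U V₁ hU hV₁
  set U₁ : Set X := U ∩ T^[k] ⁻¹' V₁ with hU₁def
  have hU₁ : Opene U₁ := ⟨hU.1.inter (hV₁.1.preimage (hTc.iterate k)), hk⟩
  obtain ⟨n, ⟨a, haU, haU'⟩, ⟨b, hbU, hbV⟩⟩ :=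
    lemH hTc hTs hM.2 homega hU₁ (opene_preimage hTc hTs hV₂ k)
  refine ⟨n + k, ⟨a, haU.1, ?_⟩, ⟨b, hbU.1, ?_⟩⟩
  · have : T^[k] (T^[n] a) ∈ V₁ := haU'.2
    simpa [Set.mem_preimage, ← Function.iterate_add_apply, Nat.add_comm k n] using this
  · have : T^[k] (T^[n] b) ∈ V₂ := hbV
    simpa [Set.mem_preimage, ← Function.iterate_add_apply, Nat.add_comm k n] using this

private lemma prod_iterate (T : X → X) (n : ℕ) (p : X × X) :
    (fun q : X × X => (T q.1, T q.2))^[n] p = (T^[n] p.1, T^[n] p.2) := by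
  induction n generalizing p with
  | zero => simp
  | succ k ih => rw [Function.iterate_succ_apply, ih]; simp

end Aux


/-- An M-system with `ω_{N_T}(x) ≠ ∅` for every minimal point `x` is weakly
mixing; in particular, every transitive compact M-system is weakly mixing. -/
theorem stmt5 {X : Type*} [MetricSpace X] [CompactSpace X] [Nontrivial X]
    (hperf : ∀ x : X, (𝓝[≠] x).NeBot)
    {T : X → X} (hTc : Continuous T) (hTs : Function.Surjective T)
    (hM : MSystem T) :
    ((∀ x : X, IsMinimalPoint T x → (omegaNT T x).Nonempty) → WeaklyMixing T) ∧
    (TransCompact T → WeaklyMixing T) := by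
  have main : (∀ x : X, IsMinimalPoint T x → (omegaNT T x).Nonempty) → WeaklyMixing T := by
    intro homega
    intro U V hU hV
    obtain ⟨⟨a, b⟩, habU⟩ := hU.2
    obtain ⟨U₁, U₂, hU₁o, hU₂o, haU₁, hbU₂, hUsub⟩ := (isOpen_prod_iff.1 hU.1) a b habU
    obtain ⟨⟨c, d⟩, hcdV⟩ := hV.2
    obtain ⟨V₁, V₂, hV₁o, hV₂o, hcV₁, hdV₂, hVsub⟩ := (isOpen_prod_iff.1 hV.1) c d hcdV
    obtain ⟨k, hk⟩ := hM.1 U₁ U₂ ⟨hU₁o, a, haU₁⟩ ⟨hU₂o, b, hbU₂⟩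
    set W : Set X := U₁ ∩ T^[k] ⁻¹' U₂ with hWdef
    have hW : Opene W := ⟨hU₁o.inter (hU₂o.preimage (hTc.iterate k)), hk⟩
    obtain ⟨n, ⟨p, hpW, hpV₁⟩, ⟨q, hqW, hqV₂⟩⟩ :=
      lem3 hTc hTs hM homega hW ⟨hV₁o, c, hcV₁⟩ (opene_preimage hTc hTs ⟨hV₂o, d, hdV₂⟩ k)
    refine ⟨n, ⟨(p, T^[k] q), hUsub ⟨hpW.1, hqW.2⟩, ?_⟩⟩
    rw [Set.mem_preimage, prod_iterate]
    refine hVsub ⟨hpV₁, ?_⟩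
    show T^[n] (T^[k] q) ∈ V₂
    have : T^[k] (T^[n] q) ∈ V₂ := hqV₂
    rwa [← Function.iterate_add_apply, Nat.add_comm k n, Function.iterate_add_apply] at this
  exact ⟨main, fun hTC => main (fun x _ => hTC x)⟩
end

section
/- A dynamical system (X,T) is both minimal and weakly mixing if and only if ω_{N_T}(x) = X for every x ∈ X. -/
open Filter Topology Set Metric

section Aux

variable {X : Type*} [MetricSpace X] [CompactSpace X] [Nontrivial X] {T : X → X}

private lemma prodIter (T : X → X) (n : ℕ) (p : X × X) :
    (fun p : X × X => (T p.1, T p.2))^[n] p = (T^[n] p.1, T^[n] p.2) := by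
  induction n generalizing p with
  | zero => simp
  | succ n ih =>
      rw [Function.iterate_succ_apply, ih]
      simp [Function.iterate_succ_apply]

private lemma wm_pair (hTc : Continuous T) (hwm : WeaklyMixing T)
    {U1 V1 U2 V2 : Set X} (hU1 : Opene U1) (hV1 : Opene V1)
    (hU2 : Opene U2) (hV2 : Opene V2) :
    ∃ U3 V3 : Set X, Opene U3 ∧ Opene V3 ∧
      NTset T U3 V3 ⊆ NTset T U1 V1 ∩ NTset T U2 V2 := by
  obtain ⟨n, pq, hpq1, hpq2⟩ := hwm (U1 ×ˢ V1) (U2 ×ˢ V2)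
    ⟨hU1.1.prod hV1.1, hU1.2.prod hV1.2⟩ ⟨hU2.1.prod hV2.1, hU2.2.prod hV2.2⟩
  rw [Set.mem_preimage, prodIter] at hpq2
  refine ⟨U1 ∩ T^[n] ⁻¹' U2, V1 ∩ T^[n] ⁻¹' V2,
    ⟨hU1.1.inter ((hU2.1).preimage (hTc.iterate n)), ⟨pq.1, hpq1.1, hpq2.1⟩⟩,
    ⟨hV1.1.inter ((hV2.1).preimage (hTc.iterate n)), ⟨pq.2, hpq1.2, hpq2.2⟩⟩, ?_⟩
  rintro m ⟨r, ⟨hr1, hr2⟩, hr3, hr4⟩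
  refine ⟨⟨r, hr1, hr3⟩, ⟨T^[n] r, hr2, ?_⟩⟩
  show T^[m] (T^[n] r) ∈ V2
  rw [← Function.iterate_add_apply, Nat.add_comm, Function.iterate_add_apply]
  exact hr4

private lemma wm_trans (hwm : WeaklyMixing T) : TopTransitive T := by
  intro U V hU hV
  obtain ⟨n, pq, hpq1, hpq2⟩ := hwm (U ×ˢ U) (V ×ˢ V)
    ⟨hU.1.prod hU.1, hU.2.prod hU.2⟩ ⟨hV.1.prod hV.1, hV.2.prod hV.2⟩
  rw [Set.mem_preimage, prodIter] at hpq2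
  exact ⟨n, pq.1, hpq1.1, hpq2.1⟩

private lemma wm_thick (hTc : Continuous T) (hTs : Function.Surjective T)
    (hwm : WeaklyMixing T) {U V : Set X} (hU : Opene U) (hV : Opene V) :
    ThickSet (NTset T U V) := by
  intro N
  have key : ∀ L : ℕ, ∃ U' V' : Set X, Opene U' ∧ Opene V' ∧
      ∀ m ∈ NTset T U' V', ∀ i ≤ L, m + i ∈ NTset T U V := by
    intro L
    induction L with
    | zero =>
        refine ⟨U, V, hU, hV, fun m hm i hi => ?_⟩
        interval_cases i
        simpa using hm
    | succ L ih =>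
        obtain ⟨U', V', hU', hV', hsub⟩ := ih
        have hW : Opene (T^[L + 1] ⁻¹' V) := by
          refine ⟨hV.1.preimage (hTc.iterate _), ?_⟩
          obtain ⟨v, hv⟩ := hV.2
          obtain ⟨w, hw⟩ := (hTs.iterate (L + 1)) v
          exact ⟨w, show T^[L+1] w ∈ V from hw ▸ hv⟩
        obtain ⟨U3, V3, hU3, hV3, hsub3⟩ := wm_pair hTc hwm hU' hV' hU hW
        refine ⟨U3, V3, hU3, hV3, fun m hm i hi => ?_⟩
        obtain ⟨h1, h2⟩ := hsub3 hm
        rcases Nat.lt_or_ge i (L + 1) with h | h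
        · exact hsub m h1 i (Nat.lt_succ_iff.mp h)
        · have hi' : i = L + 1 := le_antisymm hi h
          subst hi'
          obtain ⟨p, hp1, hp2⟩ := h2
          refine ⟨p, hp1, ?_⟩
          show T^[m + (L + 1)] p ∈ V
          rw [Nat.add_comm, Function.iterate_add_apply]
          exact hp2
  obtain ⟨U', V', hU', hV', hsub⟩ := key N
  obtain ⟨m, hm⟩ := wm_trans hwm U' V' hU' hV'
  exact ⟨m, fun i hi => hsub m hm i hi⟩

private lemma min_synd (hTc : Continuous T) (hmin : MinimalSystem T) (x : X)
    {G : Set X} (hG : IsOpen G) (hGne : G.Nonempty) : SyndeticSet (NTpt T x G) := by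
  have hcover : Set.univ ⊆ ⋃ n : ℕ, T^[n] ⁻¹' G := by
    intro y _
    obtain ⟨z, ⟨n, rfl⟩, hz⟩ := (hmin y).exists_mem_open hG hGne
    exact Set.mem_iUnion.mpr ⟨n, hz⟩
  obtain ⟨s, hs⟩ := isCompact_univ.elim_finite_subcover
    (fun n : ℕ => T^[n] ⁻¹' G) (fun n => hG.preimage (hTc.iterate n)) hcover
  refine ⟨s.sup id, fun i => ?_⟩
  have : T^[i] x ∈ ⋃ n ∈ s, T^[n] ⁻¹' G := hs (Set.mem_univ _)
  obtain ⟨j, hjs, hj⟩ := Set.mem_iUnion₂.mp this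
  refine ⟨j, Finset.le_sup (f := id) hjs, ?_⟩
  show T^[i + j] x ∈ G
  rw [Nat.add_comm, Function.iterate_add_apply]
  exact hj

end Aux

/-- A system is minimal and weakly mixing iff `ω_{N_T}(x) = X` for every `x`. -/
theorem stmt6 {X : Type*} [MetricSpace X] [CompactSpace X] [Nontrivial X]
    (hperf : ∀ x : X, (𝓝[≠] x).NeBot)
    {T : X → X} (hTc : Continuous T) (hTs : Function.Surjective T) :
    (MinimalSystem T ∧ WeaklyMixing T) ↔ (∀ x : X, omegaNT T x = Set.univ) := by
  constructor
  · rintro ⟨hmin, hwm⟩ x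
    ext z
    simp only [Set.mem_univ, iff_true]
    intro G hG hzG U V hU hV
    obtain ⟨N, hN⟩ := min_synd hTc hmin x hG ⟨z, hzG⟩
    obtain ⟨m, hm⟩ := wm_thick hTc hTs hwm hU hV N
    obtain ⟨j, hjN, hj⟩ := hN m
    exact ⟨m + j, hj, hm j hjN⟩
  · intro h
    have hmin : MinimalSystem T := by
      intro x
      rw [dense_iff_inter_open]
      intro G hG hGne
      obtain ⟨z, hz⟩ := hGne
      have hz' : z ∈ omegaNT T x := (h x) ▸ Set.mem_univ z
      obtain ⟨n, hn, -⟩ := hz' G hG hz Set.univ Set.univ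
        ⟨isOpen_univ, Set.univ_nonempty⟩ ⟨isOpen_univ, Set.univ_nonempty⟩
      exact ⟨T^[n] x, hn, n, rfl⟩
    refine ⟨hmin, ?_⟩
    intro W1 W2 hW1 hW2
    obtain ⟨⟨a, b⟩, hab⟩ := hW1.2
    obtain ⟨U1, U2, hU1, hU2, ha, hb, hUsub⟩ := (isOpen_prod_iff.mp hW1.1) a b hab
    obtain ⟨⟨c, d⟩, hcd⟩ := hW2.2
    obtain ⟨V1, V2, hV1, hV2, hc, hd, hVsub⟩ := (isOpen_prod_iff.mp hW2.1) c d hcd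
    have ha' : c ∈ omegaNT T a := (h a) ▸ Set.mem_univ c
    obtain ⟨n, hn1, q, hq1, hq2⟩ := ha' V1 hV1 hc U2 V2 ⟨hU2, ⟨b, hb⟩⟩ ⟨hV2, ⟨d, hd⟩⟩
    · refine ⟨n, (a, q), hUsub ⟨ha, hq1⟩, ?_⟩
      rw [Set.mem_preimage, prodIter]
      exact hVsub ⟨hn1, hq2⟩
end
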